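/- arXiv:1910.09618 — 4 statements merged into one kernel-verified Lean document; each statement's English description precedes it below -/
import Mathlib

section
/- Let (M, C) be a metric space and k ≥ 1. Define the lifted distance A between unordered k-tuples X = (x_1,...,x_k) and Y = (y_1,...,y_k) of elements of M by A(X,Y) = min over doubly stochastic k×k matrices S of Σ_{ij} S_{ij} C(x_i, y_j). Then A is a metric on the set of k-tuples of elements of M modulo reordering. In particular: A(X,Y) = 0 iff Y is a permutation of X, A is symmetric, and A satisfies the triangle inequality. -/
open Finset

/-- A `k × k` real matrix is doubly stochastic if it is entrywise nonnegative and
all rows and columns sum to `1`. -/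
def DoublyStochastic' {k : ℕ} (S : Matrix (Fin k) (Fin k) ℝ) : Prop :=
  (∀ i j, 0 ≤ S i j) ∧ (∀ i, ∑ j, S i j = 1) ∧ (∀ j, ∑ i, S i j = 1)

/-- The lifted distance between `k`-tuples of points of a metric space:
minimize `∑ S i j * dist (X i) (Y j)` over doubly stochastic matrices `S`. -/
noncomputable def liftedDist {M : Type*} [MetricSpace M] {k : ℕ}
    (X Y : Fin k → M) : ℝ :=
  sInf {c : ℝ | ∃ S : Matrix (Fin k) (Fin k) ℝ, DoublyStochastic' S ∧
    c = ∑ i, ∑ j, S i j * dist (X i) (Y j)}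


lemma permMatrix_DS {k : ℕ} (σ : Equiv.Perm (Fin k)) :
    DoublyStochastic' (σ.permMatrix ℝ) := by
  have h := permMatrix_mem_doublyStochastic (R := ℝ) (σ := σ)
  rw [mem_doublyStochastic_iff_sum] at h
  exact ⟨fun i j => h.1 i j, h.2.1, h.2.2⟩

lemma permMatrix_value {M : Type*} [MetricSpace M] {k : ℕ} (X Y : Fin k → M)
    (σ : Equiv.Perm (Fin k)) :
    ∑ i, ∑ j, σ.permMatrix ℝ i j * dist (X i) (Y j)
      = ∑ i, dist (X i) (Y (σ i)) := by
  refine Finset.sum_congr rfl fun i _ => ?_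
  simp [Equiv.Perm.permMatrix, PEquiv.toMatrix_apply, Equiv.toPEquiv_apply, ite_mul,
    Finset.sum_ite_eq, eq_comm]

lemma liftedDist_eq {M : Type*} [MetricSpace M] {k : ℕ} (X Y : Fin k → M) :
    liftedDist X Y = Finset.inf' Finset.univ ⟨1, Finset.mem_univ 1⟩
      (fun σ : Equiv.Perm (Fin k) => ∑ i, dist (X i) (Y (σ i))) := by
  set f : Equiv.Perm (Fin k) → ℝ := fun σ => ∑ i, dist (X i) (Y (σ i)) with hf
  set m := Finset.inf' Finset.univ ⟨1, Finset.mem_univ 1⟩ f with hm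
  have hmem : ∀ σ : Equiv.Perm (Fin k), f σ ∈ {c : ℝ | ∃ S : Matrix (Fin k) (Fin k) ℝ,
      DoublyStochastic' S ∧ c = ∑ i, ∑ j, S i j * dist (X i) (Y j)} := by
    intro σ
    exact ⟨σ.permMatrix ℝ, permMatrix_DS σ, (permMatrix_value X Y σ).symm⟩
  have hlb : ∀ c ∈ {c : ℝ | ∃ S : Matrix (Fin k) (Fin k) ℝ,
      DoublyStochastic' S ∧ c = ∑ i, ∑ j, S i j * dist (X i) (Y j)}, m ≤ c := by
    rintro c ⟨S, hS, rfl⟩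
    have hS' : S ∈ doublyStochastic ℝ (Fin k) := by
      rw [mem_doublyStochastic_iff_sum]
      exact ⟨fun i j => hS.1 i j, hS.2.1, hS.2.2⟩
    obtain ⟨w, hw0, hw1, hw2⟩ := exists_eq_sum_perm_of_mem_doublyStochastic hS'
    have hval : ∑ i, ∑ j, S i j * dist (X i) (Y j) = ∑ σ, w σ * f σ := by
      calc ∑ i, ∑ j, S i j * dist (X i) (Y j)
          = ∑ i, ∑ j, ∑ σ, w σ * (σ.permMatrix ℝ i j * dist (X i) (Y j)) := by
              refine Finset.sum_congr rfl fun i _ => Finset.sum_congr rfl fun j _ => ?_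
              rw [← hw2, Matrix.sum_apply, Finset.sum_mul]
              exact Finset.sum_congr rfl fun σ _ => by
                simp [Matrix.smul_apply, mul_assoc]
        _ = ∑ i, ∑ σ, ∑ j, w σ * (σ.permMatrix ℝ i j * dist (X i) (Y j)) :=
              Finset.sum_congr rfl fun i _ => Finset.sum_comm
        _ = ∑ σ, ∑ i, ∑ j, w σ * (σ.permMatrix ℝ i j * dist (X i) (Y j)) :=
              Finset.sum_comm
        _ = ∑ σ, w σ * ∑ i, ∑ j, σ.permMatrix ℝ i j * dist (X i) (Y j) := by
              simp_rw [Finset.mul_sum]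
        _ = ∑ σ, w σ * f σ := by
              refine Finset.sum_congr rfl fun σ _ => ?_
              rw [permMatrix_value]
    rw [hval]
    calc m = ∑ σ : Equiv.Perm (Fin k), w σ * m := by rw [← Finset.sum_mul, hw1, one_mul]
    _ ≤ ∑ σ, w σ * f σ := by
        refine Finset.sum_le_sum fun σ _ => mul_le_mul_of_nonneg_left ?_ (hw0 σ)
        exact Finset.inf'_le f (Finset.mem_univ σ)
  obtain ⟨σ₀, -, hσ₀⟩ := Finset.exists_mem_eq_inf' (⟨1, Finset.mem_univ 1⟩ :
    (Finset.univ : Finset (Equiv.Perm (Fin k))).Nonempty) f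
  refine le_antisymm ?_ ?_
  · refine csInf_le ⟨m, hlb⟩ ?_
    have h' : m = f σ₀ := hσ₀
    rw [h']
    exact hmem σ₀
  · exact le_csInf ⟨f 1, hmem 1⟩ hlb

theorem liftedDist_is_metric' {M : Type*} [MetricSpace M] {k : ℕ} (hk : 1 ≤ k)
    (X Y Z : Fin k → M) :
    0 ≤ liftedDist X Y ∧
    (liftedDist X Y = 0 ↔ ∃ σ : Equiv.Perm (Fin k), ∀ i, X i = Y (σ i)) ∧
    liftedDist X Y = liftedDist Y X ∧
    liftedDist X Z ≤ liftedDist X Y + liftedDist Y Z := by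
  have hne : (Finset.univ : Finset (Equiv.Perm (Fin k))).Nonempty := ⟨1, Finset.mem_univ 1⟩
  have h0 : ∀ (A B : Fin k → M) (σ : Equiv.Perm (Fin k)),
      0 ≤ ∑ i, dist (A i) (B (σ i)) :=
    fun A B σ => Finset.sum_nonneg fun i _ => dist_nonneg
  refine ⟨?_, ?_, ?_, ?_⟩
  · rw [liftedDist_eq]
    exact le_inf' hne _ fun σ _ => h0 X Y σ
  · rw [liftedDist_eq]
    constructor
    · intro h
      obtain ⟨σ₀, -, hσ₀⟩ := Finset.exists_mem_eq_inf' hne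
        (fun σ : Equiv.Perm (Fin k) => ∑ i, dist (X i) (Y (σ i)))
      rw [h] at hσ₀
      refine ⟨σ₀, fun i => ?_⟩
      have := (Finset.sum_eq_zero_iff_of_nonneg (fun i _ => dist_nonneg)).mp hσ₀.symm i
        (Finset.mem_univ i)
      exact dist_eq_zero.mp this
    · rintro ⟨σ, hσ⟩
      refine le_antisymm ?_ (le_inf' hne _ fun τ _ => h0 X Y τ)
      refine le_trans (Finset.inf'_le _ (Finset.mem_univ σ)) ?_
      simp [hσ]
  · rw [liftedDist_eq, liftedDist_eq]
    apply le_antisymm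
    · refine le_inf' hne _ fun σ _ => ?_
      refine le_trans (Finset.inf'_le _ (Finset.mem_univ σ⁻¹)) (le_of_eq ?_)
      rw [← Equiv.sum_comp σ (fun i => dist (X i) (Y (σ⁻¹ i)))]
      simp [dist_comm]
    · refine le_inf' hne _ fun σ _ => ?_
      refine le_trans (Finset.inf'_le _ (Finset.mem_univ σ⁻¹)) (le_of_eq ?_)
      rw [← Equiv.sum_comp σ (fun i => dist (Y i) (X (σ⁻¹ i)))]
      simp [dist_comm]
  · rw [liftedDist_eq, liftedDist_eq, liftedDist_eq]
    obtain ⟨σ, -, hσ⟩ := Finset.exists_mem_eq_inf' hne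
      (fun σ : Equiv.Perm (Fin k) => ∑ i, dist (X i) (Y (σ i)))
    obtain ⟨τ, -, hτ⟩ := Finset.exists_mem_eq_inf' hne
      (fun σ : Equiv.Perm (Fin k) => ∑ i, dist (Y i) (Z (σ i)))
    rw [hσ, hτ]
    refine le_trans (Finset.inf'_le _ (Finset.mem_univ (σ.trans τ))) ?_
    have : ∑ i, dist (Y (σ i)) (Z (τ (σ i))) = ∑ i, dist (Y i) (Z (τ i)) :=
      Equiv.sum_comp σ (fun i => dist (Y i) (Z (τ i)))
    calc ∑ i, dist (X i) (Z ((σ.trans τ) i))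
        ≤ ∑ i, (dist (X i) (Y (σ i)) + dist (Y (σ i)) (Z (τ (σ i)))) :=
          Finset.sum_le_sum fun i _ => dist_triangle _ _ _
      _ = ∑ i, dist (X i) (Y (σ i)) + ∑ i, dist (Y i) (Z (τ i)) := by
          rw [Finset.sum_add_distrib, this]

/-- The lifted distance is a metric on `k`-tuples modulo reordering: it is
nonnegative, vanishes exactly when the tuples agree up to a permutation, is
symmetric, and satisfies the triangle inequality. -/
theorem liftedDist_is_metric {M : Type*} [MetricSpace M] {k : ℕ} (hk : 1 ≤ k)
    (X Y Z : Fin k → M) :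
    0 ≤ liftedDist X Y ∧
    (liftedDist X Y = 0 ↔ ∃ σ : Equiv.Perm (Fin k), ∀ i, X i = Y (σ i)) ∧
    liftedDist X Y = liftedDist Y X ∧
    liftedDist X Z ≤ liftedDist X Y + liftedDist Y Z :=
  liftedDist_is_metric' hk X Y Z
end

section
/- For λ ≥ 0 and p ≥ 1, the unbalanced transport cost C_{λ,p}(x,y) = min { ‖J‖_1 + λ‖z‖_p : J ∈ ℝ^{|E|}, z ∈ ℝ^{|V|}, P^T J = y − x + z } is a metric on the set of mass distributions M(V) on the vertices of a connected graph G = (V,E). That is, C_{λ,p}(x,y) ≥ 0 with equality iff x = y (assuming λ > 0), C_{λ,p} is symmetric, and C_{λ,p}(x,y) ≤ C_{λ,p}(x,w) + C_{λ,p}(w,y). -/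
open Finset

variable {V E : Type*} [Fintype V] [Fintype E] [DecidableEq V]

/-- The divergence `Pᵀ J` of an edge flow on a graph given by the incidence
structure `src, tgt : E → V`. -/
def div' (src tgt : E → V) (J : E → ℝ) (v : V) : ℝ :=
  (∑ e, if tgt e = v then J e else 0) - ∑ e, if src e = v then J e else 0

/-- The vector `p`-norm on `V → ℝ`. -/
noncomputable def pnorm (p : ℝ) (z : V → ℝ) : ℝ := (∑ v, |z v| ^ p) ^ (1 / p)

/-- The unbalanced transport cost `C_{λ,p}(x,y)`:
minimize `‖J‖₁ + λ‖z‖_p` subject to `Pᵀ J = y - x + z`. -/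
noncomputable def Cunb (src tgt : E → V) (lam p : ℝ) (x y : V → ℝ) : ℝ :=
  sInf {c : ℝ | ∃ (J : E → ℝ) (z : V → ℝ),
    (∀ v, div' src tgt J v = y v - x v + z v) ∧
    c = (∑ e, |J e|) + lam * pnorm p z}

/-- The graph determined by the incidence structure is connected. -/
def IncConnected (src tgt : E → V) : Prop :=
  ∀ v w : V, Relation.ReflTransGen
    (fun a b => ∃ e, (src e = a ∧ tgt e = b) ∨ (src e = b ∧ tgt e = a)) v w

lemma div'_add (src tgt : E → V) (J₁ J₂ : E → ℝ) (v : V) :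
    div' src tgt (fun e => J₁ e + J₂ e) v = div' src tgt J₁ v + div' src tgt J₂ v := by
  have h : ∀ f : E → V, (∑ e, if f e = v then J₁ e + J₂ e else 0)
      = (∑ e, if f e = v then J₁ e else 0) + ∑ e, if f e = v then J₂ e else 0 := by
    intro f
    rw [← Finset.sum_add_distrib]
    exact Finset.sum_congr rfl fun e _ => by split <;> simp
  simp only [div', h]; ring

lemma div'_neg (src tgt : E → V) (J : E → ℝ) (v : V) :
    div' src tgt (fun e => -J e) v = -div' src tgt J v := by
  have h : ∀ f : E → V, (∑ e, if f e = v then -J e else 0)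
      = -∑ e, if f e = v then J e else 0 := by
    intro f
    rw [← Finset.sum_neg_distrib]
    exact Finset.sum_congr rfl fun e _ => by split <;> simp
  simp only [div', h]; ring

lemma abs_div'_le (src tgt : E → V) (J : E → ℝ) (v : V) :
    |div' src tgt J v| ≤ 2 * ∑ e, |J e| := by
  have h : ∀ f : E → V, |∑ e, if f e = v then J e else 0| ≤ ∑ e, |J e| := by
    intro f
    refine le_trans (Finset.abs_sum_le_sum_abs _ _) (Finset.sum_le_sum fun e _ => ?_)
    split <;> simp [abs_nonneg]
  have h1 := h tgt; have h2 := h src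
  have := abs_sub (∑ e, if tgt e = v then J e else 0) (∑ e, if src e = v then J e else 0)
  rw [div']
  linarith [abs_sub_abs_le_abs_sub (∑ e, if tgt e = v then J e else 0)
    (∑ e, if src e = v then J e else 0),
    abs_add_le (∑ e, if tgt e = v then J e else 0) (-(∑ e, if src e = v then J e else 0)),
    abs_neg (∑ e, if src e = v then J e else 0),
    (by ring_nf :
      (∑ e, if tgt e = v then J e else 0) - (∑ e, if src e = v then J e else 0)
      = (∑ e, if tgt e = v then J e else 0) + -(∑ e, if src e = v then J e else 0))]

lemma pnorm_nonneg (p : ℝ) (z : V → ℝ) : 0 ≤ pnorm p z :=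
  Real.rpow_nonneg (Finset.sum_nonneg fun v _ => Real.rpow_nonneg (abs_nonneg _) _) _

lemma pnorm_neg (p : ℝ) (z : V → ℝ) : pnorm p (fun v => -z v) = pnorm p z := by
  simp [pnorm, abs_neg]

lemma pnorm_zero {p : ℝ} (hp : 1 ≤ p) : pnorm p (fun _ : V => (0 : ℝ)) = 0 := by
  have hp0 : p ≠ 0 := by positivity
  simp [pnorm, Real.zero_rpow hp0, Real.zero_rpow (inv_ne_zero hp0)]

lemma le_pnorm {p : ℝ} (hp : 1 ≤ p) (z : V → ℝ) (v : V) : |z v| ≤ pnorm p z := by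
  have hp0 : (0 : ℝ) < p := lt_of_lt_of_le one_pos hp
  have h1 : |z v| = (|z v| ^ p) ^ (1 / p) := by
    rw [← Real.rpow_mul (abs_nonneg _), mul_one_div_cancel hp0.ne', Real.rpow_one]
  rw [h1, pnorm]
  refine Real.rpow_le_rpow (Real.rpow_nonneg (abs_nonneg _) _) ?_ (by positivity)
  exact Finset.single_le_sum (fun i _ => Real.rpow_nonneg (abs_nonneg _) _) (Finset.mem_univ v)

/-- `C_{λ,p}` is a metric on the set of mass distributions (nonnegative vectors)
on the vertices of a connected graph, for `λ > 0` and `p ≥ 1`. -/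
theorem Cunb_is_metric (src tgt : E → V) (hconn : IncConnected src tgt)
    (lam p : ℝ) (hlam : 0 < lam) (hp : 1 ≤ p) (x y w : V → ℝ)
    (hx : ∀ v, 0 ≤ x v) (hy : ∀ v, 0 ≤ y v) (hw : ∀ v, 0 ≤ w v) :
    0 ≤ Cunb src tgt lam p x y ∧
    (Cunb src tgt lam p x y = 0 ↔ x = y) ∧
    Cunb src tgt lam p x y = Cunb src tgt lam p y x ∧
    Cunb src tgt lam p x y ≤
      Cunb src tgt lam p x w + Cunb src tgt lam p w y := by
  set S : (V → ℝ) → (V → ℝ) → Set ℝ := fun a b => {c : ℝ | ∃ (J : E → ℝ) (z : V → ℝ),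
    (∀ v, div' src tgt J v = b v - a v + z v) ∧
    c = (∑ e, |J e|) + lam * pnorm p z} with hS
  have hCunb : ∀ a b, Cunb src tgt lam p a b = sInf (S a b) := fun a b => rfl
  -- every cost is nonnegative
  have hnn : ∀ a b : V → ℝ, ∀ c ∈ S a b, 0 ≤ c := by
    rintro a b c ⟨J, z, -, rfl⟩
    have := pnorm_nonneg p z
    have : 0 ≤ ∑ e, |J e| := Finset.sum_nonneg fun e _ => abs_nonneg _
    positivity
  have hbdd : ∀ a b : V → ℝ, BddBelow (S a b) := fun a b => ⟨0, fun c hc => hnn a b c hc⟩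
  -- S is nonempty
  have hne : ∀ a b : V → ℝ, (S a b).Nonempty := by
    intro a b
    exact ⟨(∑ e : E, |(0 : ℝ)|) + lam * pnorm p (fun v => a v - b v),
      0, fun v => a v - b v, fun v => by simp [div'], by simp⟩
  have hnonneg : ∀ a b : V → ℝ, 0 ≤ Cunb src tgt lam p a b := by
    intro a b; rw [hCunb]
    exact le_csInf (hne a b) (hnn a b)
  refine ⟨hnonneg x y, ?_, ?_, ?_⟩
  · -- Cunb = 0 ↔ x = y
    constructor
    · intro h0
      by_contra hxy
      obtain ⟨v, hv⟩ : ∃ v, x v ≠ y v := by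
        by_contra hc; push_neg at hc; exact hxy (funext hc)
      set m : ℝ := min (1/2) lam * |y v - x v| with hm
      have hmpos : 0 < m := by
        have : 0 < |y v - x v| := abs_pos.mpr (sub_ne_zero.mpr (Ne.symm hv))
        have : 0 < min (1/2 : ℝ) lam := lt_min (by norm_num) hlam
        positivity
      have hlow : ∀ c ∈ S x y, m ≤ c := by
        rintro c ⟨J, z, hfeas, rfl⟩
        have hA : 0 ≤ ∑ e, |J e| := Finset.sum_nonneg fun e _ => abs_nonneg _
        have hB : 0 ≤ pnorm p z := pnorm_nonneg p z
        have hzv : |z v| ≤ pnorm p z := le_pnorm hp z v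
        have hdv : |div' src tgt J v| ≤ 2 * ∑ e, |J e| := abs_div'_le src tgt J v
        have hkey : |y v - x v| ≤ 2 * (∑ e, |J e|) + pnorm p z := by
          have : y v - x v = div' src tgt J v - z v := by rw [hfeas v]; ring
          rw [this]
          calc |div' src tgt J v - z v| ≤ |div' src tgt J v| + |z v| :=
                abs_sub _ _
            _ ≤ 2 * (∑ e, |J e|) + pnorm p z := add_le_add hdv hzv
        have h1 : min (1/2 : ℝ) lam ≤ 1/2 := min_le_left _ _
        have h2 : min (1/2 : ℝ) lam ≤ lam := min_le_right _ _
        have h3 : 0 < min (1/2 : ℝ) lam := lt_min (by norm_num) hlam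
        nlinarith [abs_nonneg (y v - x v)]
      have : m ≤ sInf (S x y) := le_csInf (hne x y) hlow
      rw [← hCunb, h0] at this
      linarith
    · rintro rfl
      rw [hCunb]
      refine le_antisymm ?_ (le_csInf (hne x x) (hnn x x))
      have hmem : (0 : ℝ) ∈ S x x := by
        refine ⟨0, fun _ => 0, fun v => by simp [div'], ?_⟩
        simp [pnorm_zero hp]
      exact csInf_le (hbdd x x) hmem
  · -- symmetry
    rw [hCunb, hCunb]
    have hsub : ∀ a b : V → ℝ, S a b ⊆ S b a := by
      rintro a b c ⟨J, z, hfeas, rfl⟩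
      refine ⟨fun e => -J e, fun v => -z v, fun v => ?_, ?_⟩
      · rw [div'_neg, hfeas v]; ring
      · rw [pnorm_neg]; simp [abs_neg]
    have : S x y = S y x := le_antisymm (hsub x y) (hsub y x)
    rw [this]
  · -- triangle inequality
    rw [hCunb x y, hCunb x w, hCunb w y]
    have hcomb : ∀ a ∈ S x w, ∀ b ∈ S w y, sInf (S x y) ≤ a + b := by
      rintro _ ⟨J₁, z₁, h₁, rfl⟩ _ ⟨J₂, z₂, h₂, rfl⟩
      have hfeas : ∀ v, div' src tgt (fun e => J₁ e + J₂ e) v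
          = y v - x v + (z₁ v + z₂ v) := by
        intro v; rw [div'_add, h₁ v, h₂ v]; ring
      have hmem : ((∑ e, |J₁ e + J₂ e|) + lam * pnorm p (fun v => z₁ v + z₂ v)) ∈ S x y :=
        ⟨fun e => J₁ e + J₂ e, fun v => z₁ v + z₂ v, hfeas, rfl⟩
      refine le_trans (csInf_le (hbdd x y) hmem) ?_
      have hJ : (∑ e, |J₁ e + J₂ e|) ≤ (∑ e, |J₁ e|) + ∑ e, |J₂ e| := by
        rw [← Finset.sum_add_distrib]
        exact Finset.sum_le_sum fun e _ => abs_add_le _ _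
      have hz : pnorm p (fun v => z₁ v + z₂ v) ≤ pnorm p z₁ + pnorm p z₂ :=
        Real.Lp_add_le Finset.univ z₁ z₂ hp
      nlinarith [mul_le_mul_of_nonneg_left hz hlam.le]
    have key : ∀ a ∈ S x w, sInf (S x y) ≤ a + sInf (S w y) := by
      intro a ha
      have : sInf (S x y) - a ≤ sInf (S w y) :=
        le_csInf (hne w y) fun b hb => by linarith [hcomb a ha b hb]
      linarith
    have : sInf (S x y) - sInf (S w y) ≤ sInf (S x w) :=
      le_csInf (hne x w) fun a ha => by linarith [key a ha]
    linarith
end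

section
/- Let G be a connected graph and let x, y be probability distributions on V (i.e., balanced, with equal total mass 1). If λ ≥ diam(G)/2, then the unbalanced cost with p = 1 coincides with the Wasserstein distance: C_{λ,1}(x,y) = W_1(x,y). -/
open Finset

variable {V : Type*} [Fintype V] [DecidableEq V]

/-- Elementary flow of one unit along the oriented edge `(u,v)`. -/
noncomputable def dartFlow (u v : V) : V → V → ℝ := fun r s =>
  (if r = u ∧ s = v then 1 else 0) - (if r = v ∧ s = u then 1 else 0)

lemma dartFlow_anti (u v r s : V) : dartFlow u v r s = - dartFlow u v s r := by
  have e1 : (if s = v ∧ r = u then (1:ℝ) else 0) = (if r = u ∧ s = v then 1 else 0) :=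
    if_congr and_comm rfl rfl
  have e2 : (if s = u ∧ r = v then (1:ℝ) else 0) = (if r = v ∧ s = u then 1 else 0) :=
    if_congr and_comm rfl rfl
  simp only [dartFlow]
  rw [e1, e2]
  ring

lemma dartFlow_div (u v t : V) :
    ∑ r, dartFlow u v r t = (if t = v then (1:ℝ) else 0) - (if t = u then 1 else 0) := by
  simp only [dartFlow, Finset.sum_sub_distrib]
  congr 1 <;> simp [ite_and, Finset.sum_ite_eq']

lemma dartFlow_cost (u v : V) : ∑ r, ∑ s, |dartFlow u v r s| ≤ 2 := by
  have h : ∀ r s : V, |dartFlow u v r s| ≤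
      (if r = u ∧ s = v then (1:ℝ) else 0) + (if r = v ∧ s = u then 1 else 0) := by
    intro r s
    refine (abs_sub _ _).trans ?_
    gcongr <;> split <;> simp
  calc ∑ r, ∑ s, |dartFlow u v r s|
      ≤ ∑ r, ∑ s, ((if r = u ∧ s = v then (1:ℝ) else 0) + (if r = v ∧ s = u then 1 else 0)) := by
        gcongr <;> exact h _ _
    _ ≤ 2 := by
        simp [Finset.sum_add_distrib, ite_and, Finset.sum_ite_eq', Finset.sum_ite_eq]
        norm_num

/-- Flow of one unit along a walk. -/
noncomputable def walkFlow {G : SimpleGraph V} : ∀ {a b : V}, G.Walk a b → V → V → ℝ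
  | _, _, SimpleGraph.Walk.nil => 0
  | _, _, @SimpleGraph.Walk.cons _ _ u v _ _ p => fun r s => dartFlow u v r s + walkFlow p r s

@[simp] lemma walkFlow_nil {G : SimpleGraph V} {a : V} :
    walkFlow (SimpleGraph.Walk.nil : G.Walk a a) = 0 := rfl

@[simp] lemma walkFlow_cons {G : SimpleGraph V} {u v b : V} (h : G.Adj u v) (p : G.Walk v b) :
    walkFlow (SimpleGraph.Walk.cons h p) = fun r s => dartFlow u v r s + walkFlow p r s := rfl

lemma walkFlow_anti {G : SimpleGraph V} {a b : V} (p : G.Walk a b) (r s : V) :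
    walkFlow p r s = - walkFlow p s r := by
  induction p with
  | nil => simp only [walkFlow_nil, Pi.zero_apply, neg_zero]
  | @cons u v w h q ih =>
    rw [walkFlow_cons]
    show dartFlow u v r s + walkFlow q r s = -(dartFlow u v s r + walkFlow q s r)
    rw [dartFlow_anti u v r s, ih]; ring

lemma walkFlow_support {G : SimpleGraph V} {a b : V} (p : G.Walk a b) (r s : V)
    (hns : ¬ G.Adj r s) : walkFlow p r s = 0 := by
  induction p with
  | nil => simp only [walkFlow_nil, Pi.zero_apply]
  | @cons u v w h q ih =>
    have h1 : dartFlow u v r s = 0 := by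
      simp only [dartFlow]
      rw [if_neg, if_neg]
      · ring
      · rintro ⟨rfl, rfl⟩; exact hns h.symm
      · rintro ⟨rfl, rfl⟩; exact hns h
    rw [walkFlow_cons]
    show dartFlow u v r s + walkFlow q r s = 0
    rw [h1, ih]; ring

lemma walkFlow_div {G : SimpleGraph V} {a b : V} (p : G.Walk a b) (t : V) :
    ∑ r, walkFlow p r t = (if t = b then (1:ℝ) else 0) - (if t = a then 1 else 0) := by
  induction p with
  | nil => simp
  | cons h q ih =>
    simp only [walkFlow_cons, Finset.sum_add_distrib, ih, dartFlow_div]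
    ring

lemma walkFlow_cost {G : SimpleGraph V} {a b : V} (p : G.Walk a b) :
    ∑ r, ∑ s, |walkFlow p r s| ≤ 2 * p.length := by
  induction p with
  | nil => simp
  | @cons u v w h q ih =>
    calc ∑ r, ∑ s, |walkFlow (SimpleGraph.Walk.cons h q) r s|
        ≤ ∑ r, ∑ s, (|dartFlow u v r s| + |walkFlow q r s|) := by
          simp only [walkFlow_cons]; gcongr <;> exact abs_add_le _ _
      _ = (∑ r, ∑ s, |dartFlow u v r s|) + ∑ r, ∑ s, |walkFlow q r s| := by
          simp [Finset.sum_add_distrib]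
      _ ≤ 2 + 2 * q.length := by gcongr; exact dartFlow_cost u v
      _ = 2 * (q.length + 1 : ℕ) := by push_cast; ring
      _ = 2 * (SimpleGraph.Walk.cons h q).length := by rw [SimpleGraph.Walk.length_cons]

lemma max_add_max_neg (a : ℝ) : max a 0 + max (-a) 0 = |a| := by
  rcases le_total a 0 with h | h
  · rw [max_eq_right h, max_eq_left (by linarith), abs_of_nonpos h]; ring
  · rw [max_eq_left h, max_eq_right (by linarith), abs_of_nonneg h]; ring

lemma sum4_swap {M : Type*} [AddCommMonoid M] (f : V → V → V → V → M) :
    ∑ r, ∑ s, ∑ a, ∑ b, f r s a b = ∑ a, ∑ b, ∑ r, ∑ s, f r s a b := by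
  rw [show (∑ r, ∑ s, ∑ a, ∑ b, f r s a b) = ∑ r, ∑ a, ∑ s, ∑ b, f r s a b from
    Finset.sum_congr rfl fun r _ => Finset.sum_comm, Finset.sum_comm]
  refine Finset.sum_congr rfl fun a _ => ?_
  rw [show (∑ r, ∑ s, ∑ b, f r s a b) = ∑ r, ∑ b, ∑ s, f r s a b from
    Finset.sum_congr rfl fun r _ => Finset.sum_comm, Finset.sum_comm]

lemma exists_transport (G : SimpleGraph V) (hconn : G.Connected) (z : V → ℝ)
    (hz : ∑ v, z v = 0) :
    ∃ K : V → V → ℝ, (∀ r s, K r s = - K s r) ∧ (∀ r s, ¬ G.Adj r s → K r s = 0) ∧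
      (∀ t, ∑ r, K r t = - z t) ∧
      (1/2) * ∑ r, ∑ s, |K r s| ≤ ((G.diam : ℝ)/2) * ∑ v, |z v| := by
  have hV : Nonempty V := hconn.nonempty
  have hediam : G.ediam ≠ ⊤ := by
    obtain ⟨u, v, huv⟩ := G.exists_edist_eq_ediam_of_finite
    rw [← huv]
    exact (SimpleGraph.edist_ne_top_iff_reachable).mpr (hconn u v)
  set zp : V → ℝ := fun v => max (z v) 0 with hzp_def
  set zm : V → ℝ := fun v => max (-(z v)) 0 with hzm_def
  have hzp : ∀ v, 0 ≤ zp v := fun v => le_max_right _ _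
  have hzm : ∀ v, 0 ≤ zm v := fun v => le_max_right _ _
  have hsplit : ∀ v, z v = zp v - zm v := fun v => (max_zero_sub_eq_self (z v)).symm
  have habs : ∀ v, |z v| = zp v + zm v := fun v => (max_add_max_neg (z v)).symm
  set S := ∑ v, zp v with hS_def
  have hSm : ∑ v, zm v = S := by
    have : ∑ v, (zp v - zm v) = 0 :=
      (Finset.sum_congr rfl fun v _ => (hsplit v).symm).trans hz
    rw [Finset.sum_sub_distrib] at this
    linarith
  have habs_sum : ∑ v, |z v| = 2 * S := by
    rw [Finset.sum_congr rfl fun v _ => habs v, Finset.sum_add_distrib, hSm]; ring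
  by_cases hS : S = 0
  · -- z = 0
    have hzp0 : ∀ v, zp v = 0 := by
      intro v
      exact (Finset.sum_eq_zero_iff_of_nonneg (fun v _ => hzp v)).mp hS v (Finset.mem_univ v)
    have hzm0 : ∀ v, zm v = 0 := by
      intro v
      exact (Finset.sum_eq_zero_iff_of_nonneg (fun v _ => hzm v)).mp (hSm.trans hS)
        v (Finset.mem_univ v)
    have hz0 : ∀ v, z v = 0 := fun v => by rw [hsplit v, hzp0 v, hzm0 v]; ring
    refine ⟨0, by simp, by simp, fun t => by simp [hz0 t], ?_⟩
    have : ∑ v, |z v| = 0 := by simp [hz0]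
    simp [this]
  have hSpos : 0 < S := lt_of_le_of_ne (Finset.sum_nonneg fun v _ => hzp v) (Ne.symm hS)
  -- choose shortest walks
  have hwalk : ∀ a b : V, ∃ p : G.Walk a b, p.length = G.dist a b :=
    fun a b => hconn.exists_walk_length_eq_dist a b
  choose w hw using hwalk
  set c : V → V → ℝ := fun a b => zp a * (zm b / S) with hc_def
  have hc : ∀ a b, 0 ≤ c a b := fun a b =>
    mul_nonneg (hzp a) (div_nonneg (hzm b) hSpos.le)
  refine ⟨fun r s => ∑ a, ∑ b, c a b * walkFlow (w a b) r s, ?_, ?_, ?_, ?_⟩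
  · intro r s
    rw [← Finset.sum_neg_distrib]
    refine Finset.sum_congr rfl fun a _ => ?_
    rw [← Finset.sum_neg_distrib]
    refine Finset.sum_congr rfl fun b _ => ?_
    rw [walkFlow_anti (w a b) r s]; ring
  · intro r s hns
    refine Finset.sum_eq_zero fun a _ => Finset.sum_eq_zero fun b _ => ?_
    rw [walkFlow_support (w a b) r s hns]; ring
  · intro t
    rw [Finset.sum_comm]
    have step1 : ∀ a : V, ∑ r, ∑ b, c a b * walkFlow (w a b) r t
        = ∑ b, c a b * ((if t = b then (1:ℝ) else 0) - (if t = a then 1 else 0)) := by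
      intro a
      rw [Finset.sum_comm]
      refine Finset.sum_congr rfl fun b _ => ?_
      rw [← Finset.mul_sum, walkFlow_div (w a b) t]
    rw [Finset.sum_congr rfl fun a _ => step1 a]
    have expand : ∀ a : V, ∑ b, c a b * ((if t = b then (1:ℝ) else 0) - (if t = a then 1 else 0))
        = c a t - (if t = a then (1:ℝ) else 0) * ∑ b, c a b := by
      intro a
      rw [Finset.sum_congr rfl (fun b _ => mul_sub (c a b) _ _), Finset.sum_sub_distrib]
      congr 1
      · rw [Finset.sum_congr rfl (fun b _ => by rw [mul_ite, mul_one, mul_zero]),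
          Finset.sum_ite_eq]
        simp
      · rw [Finset.mul_sum]
        exact Finset.sum_congr rfl fun b _ => by ring
    rw [Finset.sum_congr rfl fun a _ => expand a, Finset.sum_sub_distrib]
    have e1 : ∑ a, c a t = zm t := by
      simp only [hc_def]
      rw [← Finset.sum_mul, ← hS_def]
      field_simp
    have e2 : ∑ a, (if t = a then (1:ℝ) else 0) * ∑ b, c a b = zp t := by
      rw [Finset.sum_congr rfl (fun a _ => by rw [ite_mul, one_mul, zero_mul]),
        Finset.sum_ite_eq]
      simp only [Finset.mem_univ, if_true]
      simp only [hc_def]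
      rw [← Finset.mul_sum, ← Finset.sum_div, hSm]
      field_simp
    rw [e1, e2, hsplit t]; ring
  · have hcost : ∀ a b : V, ∑ r, ∑ s, |walkFlow (w a b) r s| ≤ 2 * (G.diam : ℝ) := by
      intro a b
      refine (walkFlow_cost (w a b)).trans ?_
      have : (w a b).length ≤ G.diam := by rw [hw a b]; exact G.dist_le_diam hediam
      have := (Nat.cast_le (α := ℝ)).mpr this
      linarith
    have hsum_c : ∑ a, ∑ b, c a b = S := by
      simp only [hc_def]
      rw [Finset.sum_congr rfl fun a _ => by rw [← Finset.mul_sum, ← Finset.sum_div, hSm]]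
      rw [← Finset.sum_mul, ← hS_def]
      field_simp
    have main : ∑ r, ∑ s, |∑ a, ∑ b, c a b * walkFlow (w a b) r s|
        ≤ 2 * (G.diam : ℝ) * S := by
      calc ∑ r, ∑ s, |∑ a, ∑ b, c a b * walkFlow (w a b) r s|
          ≤ ∑ r, ∑ s, ∑ a, ∑ b, c a b * |walkFlow (w a b) r s| := by
            refine Finset.sum_le_sum fun r _ => Finset.sum_le_sum fun s _ => ?_
            refine (Finset.abs_sum_le_sum_abs _ _).trans ?_
            refine Finset.sum_le_sum fun a _ => ?_
            refine (Finset.abs_sum_le_sum_abs _ _).trans ?_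
            refine Finset.sum_le_sum fun b _ => ?_
            rw [abs_mul, abs_of_nonneg (hc a b)]
        _ = ∑ a, ∑ b, ∑ r, ∑ s, c a b * |walkFlow (w a b) r s| :=
            sum4_swap (fun r s a b => c a b * |walkFlow (w a b) r s|)
        _ = ∑ a, ∑ b, c a b * ∑ r, ∑ s, |walkFlow (w a b) r s| := by
            simp only [Finset.mul_sum]
        _ ≤ ∑ a, ∑ b, c a b * (2 * (G.diam : ℝ)) := by
            refine Finset.sum_le_sum fun a _ => Finset.sum_le_sum fun b _ => ?_
            exact mul_le_mul_of_nonneg_left (hcost a b) (hc a b)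
        _ = 2 * (G.diam : ℝ) * S := by
            rw [← hsum_c]
            simp only [Finset.mul_sum]
            exact Finset.sum_congr rfl fun a _ => Finset.sum_congr rfl fun b _ => by ring
    rw [habs_sum]
    nlinarith [main]

/-- Beckmann formulation of the Wasserstein-1 distance on a simple graph:
a flow is an antisymmetric function on ordered pairs of vertices, supported on
edges; its cost is half the sum of absolute values (each edge counted twice),
and its divergence at `v` is the net inflow `∑ w, J w v`. -/
noncomputable def W1sg (G : SimpleGraph V) (x y : V → ℝ) : ℝ :=
  sInf {c : ℝ | ∃ J : V → V → ℝ,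
    (∀ v w, J v w = - J w v) ∧
    (∀ v w, ¬ G.Adj v w → J v w = 0) ∧
    (∀ v, ∑ w, J w v = y v - x v) ∧
    c = (1 / 2) * ∑ v, ∑ w, |J v w|}

/-- The unbalanced transport cost `C_{λ,1}` on a simple graph: a slack
variable `z` allows mass to be created or destroyed at each vertex at cost
`λ` per unit. -/
noncomputable def Cunbsg (G : SimpleGraph V) (lam : ℝ) (x y : V → ℝ) : ℝ :=
  sInf {c : ℝ | ∃ (J : V → V → ℝ) (z : V → ℝ),
    (∀ v w, J v w = - J w v) ∧
    (∀ v w, ¬ G.Adj v w → J v w = 0) ∧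
    (∀ v, ∑ w, J w v = y v - x v + z v) ∧
    c = (1 / 2) * (∑ v, ∑ w, |J v w|) + lam * ∑ v, |z v|}

/-- `x` is a probability distribution on `V`. -/
def IsProb (x : V → ℝ) : Prop := (∀ v, 0 ≤ x v) ∧ ∑ v, x v = 1

/-- For balanced (probability) distributions on a connected graph, the
unbalanced cost with `p = 1` coincides with the Wasserstein distance as soon
as `λ ≥ diam(G)/2`. -/
theorem Cunb_eq_W1_of_large_lambda (G : SimpleGraph V) [DecidableRel G.Adj]
    (hconn : G.Connected) (lam : ℝ) (hlam : (G.diam : ℝ) / 2 ≤ lam)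
    (x y : V → ℝ) (hx : IsProb x) (hy : IsProb y) :
    Cunbsg G lam x y = W1sg G x y := by
  have hlam0 : 0 ≤ lam := le_trans (by positivity) hlam
  set WS : Set ℝ := {c : ℝ | ∃ J : V → V → ℝ,
    (∀ v w, J v w = - J w v) ∧
    (∀ v w, ¬ G.Adj v w → J v w = 0) ∧
    (∀ v, ∑ w, J w v = y v - x v) ∧
    c = (1 / 2) * ∑ v, ∑ w, |J v w|} with hWS
  set CS : Set ℝ := {c : ℝ | ∃ (J : V → V → ℝ) (z : V → ℝ),
    (∀ v w, J v w = - J w v) ∧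
    (∀ v w, ¬ G.Adj v w → J v w = 0) ∧
    (∀ v, ∑ w, J w v = y v - x v + z v) ∧
    c = (1 / 2) * (∑ v, ∑ w, |J v w|) + lam * ∑ v, |z v|} with hCS
  have hWne : WS.Nonempty := by
    obtain ⟨K, hKa, hKs, hKd, _⟩ := exists_transport G hconn (fun v => x v - y v)
      (by rw [Finset.sum_sub_distrib, hx.2, hy.2]; ring)
    exact ⟨(1 / 2) * ∑ v, ∑ w, |K v w|, K, hKa, hKs, fun v => by rw [hKd v]; ring, rfl⟩
  have hsub : WS ⊆ CS := by
    rintro c ⟨J, h1, h2, h3, rfl⟩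
    exact ⟨J, 0, h1, h2, fun v => by rw [h3 v]; simp, by simp⟩
  have hCne : CS.Nonempty := hWne.mono hsub
  have hWbdd : BddBelow WS := by
    refine ⟨0, ?_⟩
    rintro c ⟨J, _, _, _, rfl⟩
    positivity
  have hCbdd : BddBelow CS := by
    refine ⟨0, ?_⟩
    rintro c ⟨J, z, _, _, _, rfl⟩
    have h1 : (0:ℝ) ≤ (1 / 2) * (∑ v, ∑ w, |J v w|) := by positivity
    have h2 : (0:ℝ) ≤ lam * ∑ v, |z v| :=
      mul_nonneg hlam0 (Finset.sum_nonneg fun v _ => abs_nonneg _)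
    linarith
  rw [Cunbsg, W1sg, ← hWS, ← hCS]
  refine le_antisymm (csInf_le_csInf hCbdd hWne hsub) ?_
  refine le_csInf hCne ?_
  rintro c ⟨J, z, h1, h2, h3, rfl⟩
  have hJ0 : ∑ v, ∑ w, J w v = 0 := by
    have hA : ∑ v, ∑ w, J w v = - ∑ v, ∑ w, J w v := by
      nth_rewrite 1 [Finset.sum_comm]
      rw [← Finset.sum_neg_distrib]
      refine Finset.sum_congr rfl fun v _ => ?_
      rw [← Finset.sum_neg_distrib]
      exact Finset.sum_congr rfl fun w _ => h1 v w
    linarith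
  have hzsum : ∑ v, z v = 0 := by
    have := Finset.sum_congr rfl fun v (_ : v ∈ Finset.univ) => h3 v
    rw [hJ0] at this
    have hxy : ∑ v, (y v - x v) = 0 := by rw [Finset.sum_sub_distrib, hx.2, hy.2]; ring
    rw [show (fun v => y v - x v + z v) = fun v => (y v - x v) + z v from rfl] at this
    rw [Finset.sum_add_distrib, hxy] at this
    linarith
  obtain ⟨K, hKa, hKs, hKd, hKc⟩ := exists_transport G hconn z hzsum
  have hmem : (1 / 2) * ∑ v, ∑ w, |(fun r s => J r s + K r s) v w| ∈ WS := by
    refine ⟨fun r s => J r s + K r s,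
      fun v w => show J v w + K v w = -(J w v + K w v) by rw [h1 v w, hKa v w]; ring,
      fun v w hns => show J v w + K v w = 0 by rw [h2 v w hns, hKs v w hns]; ring,
      fun v => ?_, rfl⟩
    show ∑ w, (J w v + K w v) = y v - x v
    rw [Finset.sum_add_distrib, h3 v, hKd v]
    ring
  refine (csInf_le hWbdd hmem).trans ?_
  have hcost : (1 / 2) * ∑ v, ∑ w, |J v w + K v w|
      ≤ (1 / 2) * (∑ v, ∑ w, |J v w|) + (1 / 2) * ∑ v, ∑ w, |K v w| := by
    have : ∑ v, ∑ w, |J v w + K v w| ≤ ∑ v, ∑ w, (|J v w| + |K v w|) :=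
      Finset.sum_le_sum fun v _ => Finset.sum_le_sum fun w _ => abs_add_le _ _
    simp only [Finset.sum_add_distrib] at this
    linarith
  have hzle : ((G.diam : ℝ) / 2) * ∑ v, |z v| ≤ lam * ∑ v, |z v| :=
    mul_le_mul_of_nonneg_right hlam (Finset.sum_nonneg fun v _ => abs_nonneg _)
  calc (1 / 2) * ∑ v, ∑ w, |J v w + K v w|
      ≤ (1 / 2) * (∑ v, ∑ w, |J v w|) + (1 / 2) * ∑ v, ∑ w, |K v w| := hcost
    _ ≤ (1 / 2) * (∑ v, ∑ w, |J v w|) + lam * ∑ v, |z v| := by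
        have := hKc.trans hzle
        linarith
end

section
/- Let G = (V,E,ω) be a connected weighted graph, x, y ∈ M(V), and λ > 0. The minimum value of the sink-transport problem min_{π ∈ Π_*(x,y)} Σ_{v,w ∈ V_*} d_λ(v,w) π(v,w) on the extended graph G_* equals the minimum of the Beckmann-type unbalanced problem min { ‖J‖_{1,ω} + λ‖z‖_1 : J ∈ ℝ^{|E|}, z ∈ ℝ^{|V|}, P^T J = y − x + z }, where ‖J‖_{1,ω} = Σ_{e∈E} ω(e)|J_e|. -/
open Finset

/-- `WalkCost step a b r` holds if there is a walk from `a` to `b` whose steps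
are allowed by `step` and whose total cost is `r`. -/
inductive WalkCost {α : Type*} (step : α → α → ℝ → Prop) : α → α → ℝ → Prop
  | refl (a : α) : WalkCost step a a 0
  | tail {a b c : α} {r s : ℝ} :
      step a b r → WalkCost step b c s → WalkCost step a c (r + s)

variable {V E : Type*} [Fintype V] [Fintype E] [DecidableEq V]

/-- Allowed steps in the extended graph `G_*` (sink `v_s = none`): traverse an
edge of `G` in either direction at its weight, or move between any vertex of
`V` and the sink at cost `λ`. -/
def stepStar (src tgt : E → V) (ω : E → ℝ) (lam : ℝ) :
    Option V → Option V → ℝ → Prop := fun a b r =>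
  (∃ (e : E) (u v : V), a = some u ∧ b = some v ∧ r = ω e ∧
    ((src e = u ∧ tgt e = v) ∨ (src e = v ∧ tgt e = u))) ∨
  ((∃ v : V, a = some v) ∧ b = none ∧ r = lam) ∨
  (a = none ∧ (∃ v : V, b = some v) ∧ r = lam)

/-- The shortest-path distance `d_λ` in the extended weighted graph `G_*`. -/
noncomputable def dlam (src tgt : E → V) (ω : E → ℝ) (lam : ℝ)
    (a b : Option V) : ℝ :=
  sInf {r : ℝ | WalkCost (stepStar src tgt ω lam) a b r}


section Aux
variable {α F : Type*}

lemma WalkCost.nonneg {step : α → α → ℝ → Prop}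
    (hstep : ∀ a b r, step a b r → 0 ≤ r) {a b : α} {r : ℝ}
    (h : WalkCost step a b r) : 0 ≤ r := by
  induction h with
  | refl => exact le_refl 0
  | tail hs _ ih => exact add_nonneg (hstep _ _ _ hs) ih

lemma WalkCost.mono {p q : α → α → ℝ → Prop} (h : ∀ a b r, p a b r → q a b r)
    {a b : α} {r : ℝ} (hw : WalkCost p a b r) : WalkCost q a b r := by
  induction hw with
  | refl a => exact WalkCost.refl a
  | tail hs _ ih => exact WalkCost.tail (h _ _ _ hs) ih

def gstep (src tgt : F → α) (ω : F → ℝ) : α → α → ℝ → Prop := fun a b r =>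
  ∃ f, r = ω f ∧ ((src f = a ∧ tgt f = b) ∨ (src f = b ∧ tgt f = a))

noncomputable def gd (src tgt : F → α) (ω : F → ℝ) (a b : α) : ℝ :=
  sInf {r : ℝ | WalkCost (gstep src tgt ω) a b r}

variable {src tgt : F → α} {ω : F → ℝ}

lemma gstep_nonneg (hω : ∀ f, 0 ≤ ω f) : ∀ a b r, gstep src tgt ω a b r → 0 ≤ r := by
  rintro a b r ⟨f, rfl, -⟩; exact hω f

lemma gd_nonneg (hω : ∀ f, 0 ≤ ω f) (a b : α) : 0 ≤ gd src tgt ω a b :=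
  Real.sInf_nonneg fun _ hr => hr.nonneg (gstep_nonneg hω)

lemma gd_le_walk (hω : ∀ f, 0 ≤ ω f) {a b : α} {r : ℝ}
    (h : WalkCost (gstep src tgt ω) a b r) : gd src tgt ω a b ≤ r :=
  csInf_le ⟨0, fun _ hs => hs.nonneg (gstep_nonneg hω)⟩ h

lemma gd_self (hω : ∀ f, 0 ≤ ω f) (a : α) : gd src tgt ω a a = 0 :=
  le_antisymm (gd_le_walk hω (WalkCost.refl a)) (gd_nonneg hω a a)

end Aux

section DivLemmas
variable {α F : Type*} [Fintype F] [DecidableEq α] (src tgt : F → α)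

private lemma sum_ite_fun_add (g : F → α) (v : α) (J K : F → ℝ) :
    (∑ e, if g e = v then J e + K e else 0)
      = (∑ e, if g e = v then J e else 0) + (∑ e, if g e = v then K e else 0) := by
  rw [← Finset.sum_add_distrib]
  exact Finset.sum_congr rfl fun e _ => by split <;> simp

lemma div'_zero (v : α) : div' src tgt (0 : F → ℝ) v = 0 := by
  simp [div']

lemma div'_add_s12 (J K : F → ℝ) (v : α) :
    div' src tgt (J + K) v = div' src tgt J v + div' src tgt K v := by
  simp only [div', Pi.add_apply, sum_ite_fun_add]
  ring

lemma div'_smul (c : ℝ) (J : F → ℝ) (v : α) :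
    div' src tgt (c • J) v = c * div' src tgt J v := by
  simp only [div', Pi.smul_apply, smul_eq_mul, mul_sub, Finset.mul_sum]
  congr 1 <;> exact Finset.sum_congr rfl fun e _ => by split <;> simp

lemma div'_single [DecidableEq F] (f0 : F) (c : ℝ) (v : α) :
    div' src tgt (fun f => if f = f0 then c else 0) v
      = (if tgt f0 = v then c else 0) - (if src f0 = v then c else 0) := by
  simp only [div']
  congr 1
  · rw [Finset.sum_eq_single f0]
    · simp
    · intro b _ hb; simp [hb]
    · intro h; exact absurd (Finset.mem_univ f0) h
  · rw [Finset.sum_eq_single f0]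
    · simp
    · intro b _ hb; simp [hb]
    · intro h; exact absurd (Finset.mem_univ f0) h

lemma div'_sum {ι : Type*} (s : Finset ι) (J : ι → F → ℝ) (v : α) :
    div' src tgt (fun f => ∑ i ∈ s, J i f) v = ∑ i ∈ s, div' src tgt (J i) v := by
  classical
  induction s using Finset.induction_on with
  | empty => simp only [Finset.sum_empty]; exact div'_zero src tgt v
  | insert _ _ hni ih =>
    rw [Finset.sum_insert hni, ← ih, ← div'_add_s12]
    congr 1
    funext f
    simp [Finset.sum_insert hni]

end DivLemmas


section WalkToFlow
variable {α F : Type*} [Fintype F] [DecidableEq α] [DecidableEq F]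

lemma walk_to_flow (src tgt : F → α) (ω : F → ℝ) (hω : ∀ f, 0 ≤ ω f) {a b : α} {r : ℝ}
    (h : WalkCost (gstep src tgt ω) a b r) :
    ∃ K : F → ℝ,
      (∀ v, div' src tgt K v = (if b = v then (1:ℝ) else 0) - (if a = v then 1 else 0)) ∧
      ∑ f, ω f * |K f| ≤ r := by
  induction h with
  | refl a => exact ⟨0, fun v => by simp [div'_zero], by simp⟩
  | @tail a b c r s hstep hwalk ih =>
    obtain ⟨K', hd, hc⟩ := ih
    obtain ⟨f0, rfl, hor⟩ := hstep
    have key : ∀ (σ : ℝ), |σ| = 1 →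
        (∀ v, ((if tgt f0 = v then σ else 0) - (if src f0 = v then σ else 0))
            = (if b = v then (1:ℝ) else 0) - (if a = v then 1 else 0)) →
        ∃ K : F → ℝ,
          (∀ v, div' src tgt K v = (if c = v then (1:ℝ) else 0) - (if a = v then 1 else 0)) ∧
          ∑ f, ω f * |K f| ≤ ω f0 + s := by
      intro σ hσ hδ
      refine ⟨K' + fun f => if f = f0 then σ else 0, fun v => ?_, ?_⟩
      · rw [div'_add_s12, hd v, div'_single, hδ v]
        ring
      · have h1 : ∀ f, ω f * |K' f + (if f = f0 then σ else 0)|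
            ≤ ω f * |K' f| + ω f * |if f = f0 then σ else 0| := by
          intro f
          rw [← mul_add]
          exact mul_le_mul_of_nonneg_left (abs_add_le _ _) (hω f)
        calc ∑ f, ω f * |(K' + fun f => if f = f0 then σ else 0) f|
            ≤ ∑ f, (ω f * |K' f| + ω f * |if f = f0 then σ else 0|) :=
              Finset.sum_le_sum fun f _ => h1 f
          _ = (∑ f, ω f * |K' f|) + ∑ f, ω f * |if f = f0 then σ else 0| :=
              Finset.sum_add_distrib
          _ ≤ s + ω f0 := by
              refine add_le_add hc (le_of_eq ?_)
              rw [Finset.sum_eq_single f0]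
              · simp [hσ]
              · intro g _ hg; simp [hg]
              · intro h; exact absurd (Finset.mem_univ f0) h
          _ = ω f0 + s := by ring
    rcases hor with ⟨h1, h2⟩ | ⟨h1, h2⟩
    · exact key 1 (by norm_num) (fun v => by subst h1 h2; simp)
    · refine key (-1) (by norm_num) (fun v => by subst h1 h2; split_ifs <;> ring)

end WalkToFlow
section PWalkDefs
variable {α F : Type*}

def otail (src tgt : F → α) (e : F × Bool) : α := if e.2 then src e.1 else tgt e.1
def ohead (src tgt : F → α) (e : F × Bool) : α := if e.2 then tgt e.1 else src e.1
def opos (K : F → ℝ) (e : F × Bool) : Prop := if e.2 then 0 < K e.1 else K e.1 < 0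

inductive PWalk (src tgt : F → α) (K : F → ℝ) : α → List (F × Bool) → α → Prop
  | nil (a : α) : PWalk src tgt K a [] a
  | cons {a c : α} {e : F × Bool} {L : List (F × Bool)} :
      opos K e → otail src tgt e = a → PWalk src tgt K (ohead src tgt e) L c →
      PWalk src tgt K a (e :: L) c

def wtrace (src tgt : F → α) (a : α) (L : List (F × Bool)) : List α :=
  a :: L.map (ohead src tgt)

def wcost (ω : F → ℝ) (L : List (F × Bool)) : ℝ := (L.map (fun e => ω e.1)).sum

def wflow [DecidableEq F] (L : List (F × Bool)) : F → ℝ := fun f =>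
  (L.map (fun e => if e.1 = f then (if e.2 then (1:ℝ) else -1) else 0)).sum

def wcount [DecidableEq F] (L : List (F × Bool)) (f : F) : ℕ :=
  L.countP (fun e => decide (e.1 = f))

variable {src tgt : F → α} {K : F → ℝ} {ω : F → ℝ}

lemma PWalk.append {a b c : α} {L M : List (F × Bool)}
    (h1 : PWalk src tgt K a L b) (h2 : PWalk src tgt K b M c) :
    PWalk src tgt K a (L ++ M) c := by
  induction h1 with
  | nil => simpa using h2
  | cons hpos htl _ ih => exact PWalk.cons hpos htl (ih h2)

lemma PWalk.mem_split {a b v : α} {L : List (F × Bool)}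
    (h : PWalk src tgt K a L b) (hv : v ∈ wtrace src tgt a L) :
    ∃ L1 L2, L = L1 ++ L2 ∧ PWalk src tgt K a L1 v ∧ PWalk src tgt K v L2 b := by
  induction h with
  | nil a =>
    have : v = a := by simpa [wtrace] using hv
    subst this
    exact ⟨[], [], rfl, PWalk.nil v, PWalk.nil v⟩
  | @cons a c e L hpos htl hw ih =>
    rcases List.mem_cons.mp hv with h0 | h0
    · subst h0
      exact ⟨[], e :: L, rfl, PWalk.nil _, PWalk.cons hpos htl hw⟩
    · obtain ⟨L1, L2, rfl, w1, w2⟩ := ih h0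
      exact ⟨e :: L1, L2, rfl, PWalk.cons hpos htl w1, w2⟩

lemma PWalk.find_cycle {a b : α} {L : List (F × Bool)}
    (h : PWalk src tgt K a L b) (hnd : ¬ (wtrace src tgt a L).Nodup) :
    ∃ c M, M ≠ [] ∧ PWalk src tgt K c M c := by
  induction h with
  | nil a => exact absurd (by simp [wtrace]) hnd
  | @cons a c e L hpos htl hw ih =>
    by_cases hmem : a ∈ wtrace src tgt (ohead src tgt e) L
    · obtain ⟨L1, L2, -, w1, -⟩ := hw.mem_split hmem
      exact ⟨a, e :: L1, List.cons_ne_nil _ _, PWalk.cons hpos htl w1⟩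
    · apply ih
      intro hnd'
      apply hnd
      have heq : wtrace src tgt a (e :: L) = a :: wtrace src tgt (ohead src tgt e) L := rfl
      rw [heq, List.nodup_cons]
      exact ⟨hmem, hnd'⟩

lemma PWalk.entries {a b : α} {L : List (F × Bool)}
    (h : PWalk src tgt K a L b) : ∀ e ∈ L, opos K e := by
  induction h with
  | nil => simp
  | cons hpos _ _ ih =>
    intro e he
    rcases List.mem_cons.mp he with rfl | he
    · exact hpos
    · exact ih e he

lemma PWalk.reverse {a b : α} {L : List (F × Bool)}
    (h : PWalk tgt src K a L b) : PWalk src tgt K b L.reverse a := by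
  induction h with
  | nil a => exact PWalk.nil a
  | @cons a c e L hpos htl hw ih =>
    rw [List.reverse_cons]
    refine ih.append ?_
    have h1 : ohead tgt src e = otail src tgt e := rfl
    have h2 : otail tgt src e = ohead src tgt e := rfl
    rw [h1]
    exact htl ▸ h2 ▸ PWalk.cons hpos rfl (PWalk.nil _)

lemma PWalk.walkCost {a b : α} {L : List (F × Bool)}
    (h : PWalk src tgt K a L b) : WalkCost (gstep src tgt ω) a b (wcost ω L) := by
  induction h with
  | nil a => exact (by simpa [wcost] using WalkCost.refl (step := gstep src tgt ω) a)
  | @cons a c e L hpos htl hw ih =>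
    have : wcost ω (e :: L) = ω e.1 + wcost ω L := by simp [wcost]
    rw [this]
    refine WalkCost.tail ?_ ih
    refine ⟨e.1, rfl, ?_⟩
    rcases e with ⟨f, s⟩
    cases s
    · right; constructor <;> simp_all [otail, ohead]
    · left; constructor <;> simp_all [otail, ohead]

lemma wtrace_length {a : α} {L : List (F × Bool)} :
    (wtrace src tgt a L).length = L.length + 1 := by simp [wtrace]

end PWalkDefs
section WFlowLemmas
variable {α F : Type*} {src tgt : F → α} {K ω : F → ℝ} [DecidableEq F]

lemma wflow_cons (e : F × Bool) (L : List (F × Bool)) (f : F) :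
    wflow (e :: L) f = (if e.1 = f then (if e.2 then (1:ℝ) else -1) else 0) + wflow L f := by
  simp [wflow]

lemma wcount_cons (e : F × Bool) (L : List (F × Bool)) (f : F) :
    wcount (e :: L) f = wcount L f + (if e.1 = f then 1 else 0) := by
  simp [wcount, List.countP_cons]

lemma wcount_pos_of_mem {e : F × Bool} {L : List (F × Bool)} (he : e ∈ L) :
    0 < wcount L e.1 :=
  List.countP_pos_iff.mpr ⟨e, he, by simp⟩

lemma wflow_eq_count_of_pos {L : List (F × Bool)} (hent : ∀ e ∈ L, opos K e)
    {f : F} (hf : 0 < K f) : wflow L f = (wcount L f : ℝ) := by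
  induction L with
  | nil => simp [wflow, wcount]
  | cons e L ih =>
    have hent' : ∀ e' ∈ L, opos K e' := fun e' he' => hent e' (List.mem_cons_of_mem e he')
    rw [wflow_cons, wcount_cons, ih hent']
    by_cases he : e.1 = f
    · have hp := hent e List.mem_cons_self
      rcases e with ⟨g, s⟩
      cases s
      · exfalso; simp only [opos] at hp; simp at hp
        simp only at he; rw [he] at hp; exact absurd hf (not_lt.mpr hp.le)
      · simp [he]; push_cast; ring
    · simp [he]

lemma wflow_eq_neg_count_of_neg {L : List (F × Bool)} (hent : ∀ e ∈ L, opos K e)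
    {f : F} (hf : K f < 0) : wflow L f = -(wcount L f : ℝ) := by
  induction L with
  | nil => simp [wflow, wcount]
  | cons e L ih =>
    have hent' : ∀ e' ∈ L, opos K e' := fun e' he' => hent e' (List.mem_cons_of_mem e he')
    rw [wflow_cons, wcount_cons, ih hent']
    by_cases he : e.1 = f
    · have hp := hent e List.mem_cons_self
      rcases e with ⟨g, s⟩
      cases s
      · simp only at he; simp [he]
      · exfalso; simp only [opos] at hp; simp at hp
        simp only at he; rw [he] at hp; exact absurd hf (not_lt.mpr hp.le)
    · simp [he]

lemma wcount_eq_zero_of_Kzero {L : List (F × Bool)} (hent : ∀ e ∈ L, opos K e)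
    {f : F} (hf : K f = 0) : wcount L f = 0 := by
  rw [wcount, List.countP_eq_zero]
  intro e he
  have hp := hent e he
  simp only [opos] at hp
  intro hc
  have : e.1 = f := by simpa using hc
  rcases e with ⟨g, s⟩
  cases s <;> simp only at this <;> rw [this] at hp <;> simp [hf] at hp

lemma wflow_eq_zero_of_Kzero {L : List (F × Bool)} (hent : ∀ e ∈ L, opos K e)
    {f : F} (hf : K f = 0) : wflow L f = 0 := by
  induction L with
  | nil => simp [wflow]
  | cons e L ih =>
    have hent' : ∀ e' ∈ L, opos K e' := fun e' he' => hent e' (List.mem_cons_of_mem e he')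
    rw [wflow_cons, ih hent']
    by_cases he : e.1 = f
    · have hp := hent e List.mem_cons_self
      rcases e with ⟨g, s⟩
      simp only at he
      cases s <;> simp only [opos] at hp <;> simp at hp <;> rw [he] at hp <;>
        simp [hf] at hp
    · simp [he]

lemma abs_reduce {L : List (F × Bool)} (hent : ∀ e ∈ L, opos K e)
    {m : ℝ} (hm : 0 ≤ m) (f : F) (hK : m * (wcount L f : ℝ) ≤ |K f|) :
    |K f - m * wflow L f| = |K f| - m * (wcount L f : ℝ) := by
  rcases lt_trichotomy (K f) 0 with h | h | h
  · rw [wflow_eq_neg_count_of_neg hent h]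
    rw [abs_of_neg h] at hK ⊢
    rw [abs_of_nonpos (by linarith)]
    ring
  · rw [wflow_eq_zero_of_Kzero hent h, wcount_eq_zero_of_Kzero hent h, h]
    simp
  · rw [wflow_eq_count_of_pos hent h]
    rw [abs_of_pos h] at hK ⊢
    rw [abs_of_nonneg (by linarith)]

lemma Kzero_of_reduce {L : List (F × Bool)} (hent : ∀ e ∈ L, opos K e)
    {f : F} (hcount : wcount L f ≠ 0) :
    K f - (|K f| / (wcount L f : ℝ)) * wflow L f = 0 := by
  have hc : (0:ℝ) < (wcount L f : ℝ) := by
    exact_mod_cast Nat.pos_of_ne_zero hcount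
  rcases lt_trichotomy (K f) 0 with h | h | h
  · rw [wflow_eq_neg_count_of_neg hent h, abs_of_neg h]
    field_simp; ring
  · rw [wflow_eq_zero_of_Kzero hent h, h]
    simp
  · rw [wflow_eq_count_of_pos hent h, abs_of_pos h]
    field_simp; ring

end WFlowLemmas
section SearchLemmas
variable {α F : Type*} [Fintype α] [Fintype F] [DecidableEq α] [DecidableEq F]
variable {src tgt : F → α} {K ω : F → ℝ}

lemma div'_wflow {a b : α} {L : List (F × Bool)} (h : PWalk src tgt K a L b) (v : α) :
    div' src tgt (wflow L) v = (if b = v then (1:ℝ) else 0) - (if a = v then 1 else 0) := by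
  induction h with
  | nil a =>
    rw [show wflow ([] : List (F × Bool)) = (0 : F → ℝ) from funext fun f => by simp [wflow]]
    simp [div'_zero]
  | @cons a c e L hpos htl hw ih =>
    have hsplit : wflow (e :: L)
        = (fun f => if f = e.1 then (if e.2 then (1:ℝ) else -1) else 0) + wflow L := by
      funext f
      rw [wflow_cons, Pi.add_apply]
      congr 1
      by_cases hf : f = e.1
      · simp [hf]
      · simp [hf, Ne.symm hf]
    rw [hsplit, div'_add_s12, div'_single, ih]
    subst htl
    rcases e with ⟨f, s⟩
    cases s <;> simp only [otail, ohead, if_true, if_false, Bool.false_eq_true] <;>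
      split_ifs <;> ring

lemma wcost_eq_sum (ω : F → ℝ) (L : List (F × Bool)) :
    wcost ω L = ∑ f, ω f * (wcount L f : ℝ) := by
  induction L with
  | nil => simp [wcost, wcount]
  | cons e L ih =>
    have hc : ∀ f, ((wcount (e :: L) f : ℝ)) = (wcount L f : ℝ) + (if e.1 = f then 1 else 0) := by
      intro f
      rw [wcount_cons]
      push_cast
      split_ifs <;> simp
    have h1 : wcost ω (e :: L) = ω e.1 + wcost ω L := by simp [wcost]
    have h2 : ∑ f, ω f * (if e.1 = f then (1:ℝ) else 0) = ω e.1 := by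
      rw [Finset.sum_eq_single e.1]
      · simp
      · intro b _ hb; simp [Ne.symm hb]
      · intro h; exact absurd (Finset.mem_univ e.1) h
    have h3 : ∑ f, ω f * ((wcount (e :: L) f : ℝ))
        = (∑ f, ω f * (wcount L f : ℝ)) + ∑ f, ω f * (if e.1 = f then (1:ℝ) else 0) := by
      rw [← Finset.sum_add_distrib]
      refine Finset.sum_congr rfl fun f _ => ?_
      rw [hc f, mul_add]
    rw [h1, ih, h3, h2]; ring

/-- Forward search: from a vertex with positive inflow, either reach a vertex with
positive divergence, or produce an arbitrarily long positive walk. -/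
lemma forward_search (hω : True) (D : α → ℝ) (hdiv : ∀ v, div' src tgt K v = D v) :
    ∀ (n : ℕ) (v : α), (∃ e, opos K e ∧ ohead src tgt e = v) →
      (∃ w L, PWalk src tgt K v L w ∧ 0 < D w) ∨
      (∃ L w, PWalk src tgt K v L w ∧ n ≤ L.length) := by
  intro n
  induction n with
  | zero => exact fun v _ => Or.inr ⟨[], v, PWalk.nil v, Nat.zero_le _⟩
  | succ n ih =>
    intro v hv
    by_cases hD : 0 < D v
    · exact Or.inl ⟨v, [], PWalk.nil v, hD⟩
    · -- find outgoing positive oriented edge at v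
      have hout : ∃ e', opos K e' ∧ otail src tgt e' = v := by
        by_contra hno
        push_neg at hno
        have hsrc : ∀ f, src f = v → K f ≤ 0 := by
          intro f hf
          by_contra hpos
          push_neg at hpos
          exact hno (f, true) (by simpa [opos] using hpos) (by simp [otail, hf])
        have htgt : ∀ f, tgt f = v → 0 ≤ K f := by
          intro f hf
          by_contra hneg
          push_neg at hneg
          exact hno (f, false) (by simpa [opos] using hneg) (by simp [otail, hf])
        obtain ⟨e, hep, hehd⟩ := hv
        have hDv : div' src tgt K v ≤ 0 := by rw [hdiv]; exact not_lt.mp hD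
        rw [div'] at hDv
        have hterm_in : ∀ f, 0 ≤ (if tgt f = v then K f else 0) := fun f => by
          split
          · exact htgt f ‹_›
          · exact le_refl 0
        have hterm_out : ∀ f, (if src f = v then K f else 0) ≤ 0 := fun f => by
          split
          · exact hsrc f ‹_›
          · exact le_refl 0
        have hge : (0:ℝ) ≤ ∑ f, (if tgt f = v then K f else 0) :=
          Finset.sum_nonneg fun f _ => hterm_in f
        have hle : ∑ f, (if src f = v then K f else 0) ≤ 0 :=
          Finset.sum_nonpos fun f _ => hterm_out f
        rcases e with ⟨f0, s0⟩
        cases s0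
        · have hep' : K f0 < 0 := by simpa [opos] using hep
          have hf0 : src f0 = v := by simpa [ohead] using hehd
          have hlt : (0:ℝ) < ∑ f, -(if src f = v then K f else 0) :=
            Finset.sum_pos' (fun f _ => neg_nonneg.mpr (hterm_out f))
              ⟨f0, Finset.mem_univ f0, by rw [if_pos hf0]; linarith⟩
          rw [Finset.sum_neg_distrib] at hlt
          linarith
        · have hep' : 0 < K f0 := by simpa [opos] using hep
          have hf0 : tgt f0 = v := by simpa [ohead] using hehd
          have hlt : (0:ℝ) < ∑ f, (if tgt f = v then K f else 0) :=
            Finset.sum_pos' (fun f _ => hterm_in f)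
              ⟨f0, Finset.mem_univ f0, by rw [if_pos hf0]; linarith⟩
          linarith
      obtain ⟨e', hpos', htl'⟩ := hout
      rcases ih (ohead src tgt e') ⟨e', hpos', rfl⟩ with ⟨w, L, hw, hDw⟩ | ⟨L, w, hw, hlen⟩
      · exact Or.inl ⟨w, e' :: L, PWalk.cons hpos' htl' hw, hDw⟩
      · exact Or.inr ⟨e' :: L, w, PWalk.cons hpos' htl' hw, by simpa using Nat.succ_le_succ hlen⟩

end SearchLemmas
section Decomp
variable {α F : Type*} [Fintype α] [Fintype F] [DecidableEq α] [DecidableEq F]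
variable {src tgt : F → α}

open Classical in
noncomputable def suppCard {β : Type*} [Fintype β] (K : β → ℝ) : ℕ :=
  (Finset.univ.filter (fun f => K f ≠ 0)).card

open Classical in
lemma suppCard_le {β : Type*} [Fintype β] {K' K : β → ℝ} (h : ∀ f, K f = 0 → K' f = 0) :
    suppCard K' ≤ suppCard K := by
  apply Finset.card_le_card
  intro f hf
  rw [Finset.mem_filter] at hf ⊢
  exact ⟨Finset.mem_univ f, fun h0 => hf.2 (h f h0)⟩

open Classical in
lemma suppCard_lt {β : Type*} [Fintype β] {K' K : β → ℝ} (h : ∀ f, K f = 0 → K' f = 0)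
    {f0 : β} (h1 : K f0 ≠ 0) (h2 : K' f0 = 0) : suppCard K' < suppCard K := by
  apply Finset.card_lt_card
  rw [Finset.ssubset_iff_of_subset]
  · exact ⟨f0, Finset.mem_filter.mpr ⟨Finset.mem_univ _, h1⟩,
      fun hc => (Finset.mem_filter.mp hc).2 h2⟩
  · intro f hf
    rw [Finset.mem_filter] at hf ⊢
    exact ⟨Finset.mem_univ f, fun h0 => hf.2 (h f h0)⟩

lemma min_edge_facts {K : F → ℝ} {a b : α} {W : List (F × Bool)}
    (hw : PWalk src tgt K a W b) {m : ℝ} (hm0 : 0 ≤ m)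
    (hme : ∀ e ∈ W, m ≤ |K e.1| / (wcount W e.1 : ℝ)) :
    ∀ f, m * (wcount W f : ℝ) ≤ |K f| := by
  intro f
  by_cases hc : wcount W f = 0
  · rw [hc]; simp [abs_nonneg]
  · obtain ⟨e, he, hef⟩ : ∃ e ∈ W, e.1 = f := by
      have := List.countP_pos_iff.mp (Nat.pos_of_ne_zero hc)
      obtain ⟨e, he, hef⟩ := this
      exact ⟨e, he, by simpa using hef⟩
    have hcpos : (0:ℝ) < (wcount W f : ℝ) := by exact_mod_cast Nat.pos_of_ne_zero hc
    have h2 := hef ▸ hme e he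
    rw [le_div_iff₀ hcpos] at h2
    linarith

lemma cycle_reduce (ω : F → ℝ) (hω : ∀ f, 0 < ω f) {K : F → ℝ} {c : α}
    {M : List (F × Bool)} (hM : M ≠ []) (hw : PWalk src tgt K c M c) :
    ∃ K' : F → ℝ, (∀ v, div' src tgt K' v = div' src tgt K v) ∧
      (∑ f, ω f * |K' f|) ≤ (∑ f, ω f * |K f|) ∧
      suppCard K' < suppCard K := by
  classical
  have hent := hw.entries
  have hSne : (M.toFinset.image (fun e => |K e.1| / (wcount M e.1 : ℝ))).Nonempty :=
    ⟨_, Finset.mem_image_of_mem _ (List.mem_toFinset.mpr (List.exists_mem_of_ne_nil M hM).choose_spec)⟩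
  set S := M.toFinset.image (fun e => |K e.1| / (wcount M e.1 : ℝ)) with hS
  set m := S.min' hSne with hmdef
  have hmem : ∀ e ∈ M, |K e.1| / (wcount M e.1 : ℝ) ∈ S := fun e he =>
    Finset.mem_image_of_mem _ (List.mem_toFinset.mpr he)
  have hme : ∀ e ∈ M, m ≤ |K e.1| / (wcount M e.1 : ℝ) := fun e he =>
    Finset.min'_le _ _ (hmem e he)
  have hmpos : 0 < m := by
    rw [hmdef, Finset.lt_min'_iff]
    intro r hr
    rw [hS] at hr
    obtain ⟨e, heM, rfl⟩ := Finset.mem_image.mp hr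
    have heM' : e ∈ M := List.mem_toFinset.mp heM
    have hKe : K e.1 ≠ 0 := by
      have := hent e heM'
      rcases e with ⟨g, s⟩
      cases s <;> simp only [opos] at this <;> simp at this ⊢ <;> intro hc <;>
        rw [hc] at this <;> simp at this
    have : (0:ℝ) < (wcount M e.1 : ℝ) := by
      exact_mod_cast wcount_pos_of_mem heM'
    positivity
  have hcount := min_edge_facts hw hmpos.le hme
  refine ⟨fun f => K f - m * wflow M f, ?_, ?_, ?_⟩
  · intro v
    have heq : (fun f => K f - m * wflow M f) = K + (-m) • wflow M := by
      funext f; simp; ring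
    rw [heq, div'_add_s12, div'_smul, div'_wflow hw]
    ring
  · apply Finset.sum_le_sum
    intro f _
    rw [abs_reduce hent hmpos.le f (hcount f)]
    have : (0:ℝ) ≤ m * (wcount M f : ℝ) := by positivity
    nlinarith [(hω f).le, abs_nonneg (K f)]
  · have h0 : ∀ f, K f = 0 → K f - m * wflow M f = 0 := fun f hf => by
      rw [hf, wflow_eq_zero_of_Kzero hent hf]; ring
    obtain ⟨e, heM, hmin⟩ : ∃ e ∈ M.toFinset, |K e.1| / (wcount M e.1 : ℝ) = m := by
      obtain ⟨e, he, heq⟩ := Finset.mem_image.mp (Finset.min'_mem S hSne)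
      exact ⟨e, he, heq⟩
    have heM' : e ∈ M := List.mem_toFinset.mp heM
    have hKe : K e.1 ≠ 0 := by
      have := hent e heM'
      rcases e with ⟨g, s⟩
      cases s <;> simp only [opos] at this <;> simp at this ⊢ <;> intro hc <;>
        rw [hc] at this <;> simp at this
    refine suppCard_lt h0 hKe ?_
    rw [← hmin]
    exact Kzero_of_reduce hent (wcount_pos_of_mem heM').ne'
end Decomp
section DecompMain
variable {α F : Type*} [Fintype α] [Fintype F] [DecidableEq α] [DecidableEq F]
variable {src tgt : F → α}

lemma div'_swap (src tgt : F → α) (J : F → ℝ) (v : α) :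
    div' tgt src J v = - div' src tgt J v := by
  rw [div', div', neg_sub]

lemma opos_ne_zero {K : F → ℝ} {e : F × Bool} (h : opos K e) : K e.1 ≠ 0 := by
  rcases e with ⟨g, s⟩
  cases s
  · exact (by simpa [opos] using h : K g < 0).ne
  · exact (by simpa [opos] using h : 0 < K g).ne'

open Classical in
lemma suppCard_eq_zero {β : Type*} [Fintype β] {K : β → ℝ} (h : suppCard K = 0) :
    ∀ f, K f = 0 := by
  intro f
  have h2 : (Finset.univ.filter (fun f => K f ≠ 0)).card = 0 := h
  rw [Finset.card_eq_zero, Finset.filter_eq_empty_iff] at h2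
  exact not_not.mp (h2 (Finset.mem_univ f))

lemma decomp_base (ω : F → ℝ) (hω : ∀ f, 0 ≤ ω f) {K : F → ℝ} (hK : ∀ f, K f = 0)
    {X Y : α → ℝ} (hX : ∀ a, 0 ≤ X a)
    (hdiv : ∀ v, div' src tgt K v = Y v - X v) :
    ∃ π : α → α → ℝ, (∀ a b, 0 ≤ π a b) ∧ (∀ a, ∑ b, π a b = X a) ∧
      (∀ b, ∑ a, π a b = Y b) ∧
      (∑ a, ∑ b, gd src tgt ω a b * π a b) ≤ ∑ f, ω f * |K f| := by
  have hK' : K = 0 := funext hK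
  subst hK'
  have hXY : ∀ v, X v = Y v := by
    intro v
    have := hdiv v
    rw [div'_zero] at this
    linarith
  refine ⟨fun a b => if a = b then X a else 0, ?_, ?_, ?_, ?_⟩
  · intro a b
    dsimp only
    split
    · exact hX a
    · exact le_refl 0
  · intro a; simp
  · intro b
    rw [Finset.sum_eq_single b]
    · simp [hXY b]
    · intro a _ hab; simp [hab]
    · intro h; exact absurd (Finset.mem_univ b) h
  · have hinner : ∀ a, (∑ b, gd src tgt ω a b * (if a = b then X a else 0)) = 0 := by
      intro a
      refine Finset.sum_eq_zero fun b _ => ?_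
      by_cases hab : a = b
      · subst hab; simp [gd_self hω]
      · simp [hab]
    rw [Finset.sum_congr rfl fun a _ => hinner a]
    simp

lemma decomp (ω : F → ℝ) (hω : ∀ f, 0 < ω f) :
    ∀ (n : ℕ) (K : F → ℝ) (X Y : α → ℝ),
      suppCard K + suppCard X + suppCard Y ≤ n →
      (∀ a, 0 ≤ X a) → (∀ a, 0 ≤ Y a) →
      (∀ v, div' src tgt K v = Y v - X v) →
      ∃ π : α → α → ℝ, (∀ a b, 0 ≤ π a b) ∧ (∀ a, ∑ b, π a b = X a) ∧
        (∀ b, ∑ a, π a b = Y b) ∧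
        (∑ a, ∑ b, gd src tgt ω a b * π a b) ≤ ∑ f, ω f * |K f| := by
  have hω0 : ∀ f, 0 ≤ ω f := fun f => (hω f).le
  intro n
  induction n with
  | zero =>
    intro K X Y hn hX hY hdiv
    exact decomp_base ω hω0 (suppCard_eq_zero (by omega)) hX hdiv
  | succ n ih =>
    intro K X Y hn hX hY hdiv
    classical
    by_cases hK0 : ∀ f, K f = 0
    · exact decomp_base ω hω0 hK0 hX hdiv
    · push_neg at hK0
      obtain ⟨f0, hf0⟩ := hK0
      obtain ⟨e0, hpos0⟩ : ∃ e0 : F × Bool, opos K e0 := by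
        rcases lt_or_gt_of_ne hf0 with h | h
        · exact ⟨(f0, false), by simpa [opos] using h⟩
        · exact ⟨(f0, true), by simpa [opos] using h⟩
      -- shared cycle finisher
      have finish_cycle : ∀ (c : α) (M : List (F × Bool)), M ≠ [] →
          PWalk src tgt K c M c →
          ∃ π : α → α → ℝ, (∀ a b, 0 ≤ π a b) ∧ (∀ a, ∑ b, π a b = X a) ∧
            (∀ b, ∑ a, π a b = Y b) ∧
            (∑ a, ∑ b, gd src tgt ω a b * π a b) ≤ ∑ f, ω f * |K f| := by
        intro c M hMne hcyc
        obtain ⟨K', hdiv', hcost', hsupp'⟩ := cycle_reduce ω hω hMne hcyc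
        have hdiv'' : ∀ v, div' src tgt K' v = Y v - X v := fun v => by
          rw [hdiv' v, hdiv v]
        obtain ⟨π, h1, h2, h3, h4⟩ := ih K' X Y (by omega) hX hY hdiv''
        exact ⟨π, h1, h2, h3, h4.trans hcost'⟩
      rcases forward_search trivial (fun v => Y v - X v) hdiv (Fintype.card α)
          (ohead src tgt e0) ⟨e0, hpos0, rfl⟩ with ⟨w, Lf, hwf, hDw⟩ | ⟨Lf, w, hwf, hlen⟩
      swap
      · -- long forward walk: pigeonhole gives a cycle
        have hnd : ¬ (wtrace src tgt (ohead src tgt e0) Lf).Nodup := by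
          intro hnd
          have := hnd.length_le_card
          rw [wtrace_length] at this
          omega
        obtain ⟨c, M, hMne, hcyc⟩ := hwf.find_cycle hnd
        exact finish_cycle c M hMne hcyc
      -- backward search
      have hbdiv : ∀ v, div' tgt src K v = X v - Y v := fun v => by
        rw [div'_swap, hdiv v]; ring
      rcases forward_search trivial (fun v => X v - Y v) hbdiv (Fintype.card α)
          (ohead tgt src e0) ⟨e0, hpos0, rfl⟩ with ⟨u, Lb, hwb, hDu⟩ | ⟨Lb, u', hwb, hlen⟩
      swap
      · -- long backward walk: reverse it, pigeonhole gives a cycle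
        have hw' := hwb.reverse
        have hnd : ¬ (wtrace src tgt u' Lb.reverse).Nodup := by
          intro hnd
          have := hnd.length_le_card
          rw [wtrace_length, List.length_reverse] at this
          omega
        obtain ⟨c, M, hMne, hcyc⟩ := hw'.find_cycle hnd
        exact finish_cycle c M hMne hcyc
      -- PATH CASE
      have hW : PWalk src tgt K u (Lb.reverse ++ e0 :: Lf) w :=
        (hwb.reverse).append (PWalk.cons hpos0 rfl hwf)
      set W := Lb.reverse ++ e0 :: Lf with hWdef
      have hent := hW.entries
      have hXu : 0 < X u := by have := hY u; linarith
      have hYw : 0 < Y w := by have := hX w; linarith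
      have hSne : (insert (X u) (insert (Y w)
          (W.toFinset.image fun e => |K e.1| / (wcount W e.1 : ℝ)))).Nonempty :=
        ⟨X u, Finset.mem_insert_self _ _⟩
      set S := insert (X u) (insert (Y w)
          (W.toFinset.image fun e => |K e.1| / (wcount W e.1 : ℝ))) with hS
      set m := S.min' hSne with hm
      have hmXu : m ≤ X u := Finset.min'_le _ _ (Finset.mem_insert_self _ _)
      have hmYw : m ≤ Y w :=
        Finset.min'_le _ _ (Finset.mem_insert_of_mem (Finset.mem_insert_self _ _))
      have hme : ∀ e ∈ W, m ≤ |K e.1| / (wcount W e.1 : ℝ) := fun e he =>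
        Finset.min'_le _ _ (Finset.mem_insert_of_mem (Finset.mem_insert_of_mem
          (Finset.mem_image_of_mem _ (List.mem_toFinset.mpr he))))
      have hmpos : 0 < m := by
        rw [hm, Finset.lt_min'_iff]
        intro r hr
        rcases Finset.mem_insert.mp hr with rfl | hr
        · exact hXu
        rcases Finset.mem_insert.mp hr with rfl | hr
        · exact hYw
        obtain ⟨e, heM, rfl⟩ := Finset.mem_image.mp hr
        have heM' := List.mem_toFinset.mp heM
        have hKe : K e.1 ≠ 0 := opos_ne_zero (hent e heM')
        have hcpos : (0:ℝ) < (wcount W e.1 : ℝ) := by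
          exact_mod_cast wcount_pos_of_mem heM'
        positivity
      have hcount := min_edge_facts hW hmpos.le hme
      set K' := fun f => K f - m * wflow W f with hK'
      set X' := fun a => X a - (if u = a then m else 0) with hXd
      set Y' := fun a => Y a - (if w = a then m else 0) with hYd
      have hifu : (if u = u then m else 0) = m := if_pos rfl
      have hifw : (if w = w then m else 0) = m := if_pos rfl
      have hX'0 : ∀ a, 0 ≤ X' a := by
        intro a
        rw [hXd]
        dsimp only
        by_cases ha : u = a
        · subst ha; rw [hifu]; linarith
        · rw [if_neg ha]; simpa using hX a
      have hY'0 : ∀ a, 0 ≤ Y' a := by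
        intro a
        rw [hYd]
        dsimp only
        by_cases ha : w = a
        · subst ha; rw [hifw]; linarith
        · rw [if_neg ha]; simpa using hY a
      have hdiv' : ∀ v, div' src tgt K' v = Y' v - X' v := by
        intro v
        have heq : K' = K + (-m) • wflow W := funext fun f => by rw [hK']; simp; ring
        rw [heq, div'_add_s12, div'_smul, div'_wflow hW, hdiv v, hXd, hYd]
        simp only
        split_ifs <;> ring
      have hcost' : (∑ f, ω f * |K' f|) = (∑ f, ω f * |K f|) - m * wcost ω W := by
        have h1 : ∀ f, ω f * |K' f| = ω f * |K f| - m * (ω f * (wcount W f : ℝ)) := by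
          intro f
          rw [hK']
          simp only
          rw [abs_reduce hent hmpos.le f (hcount f)]
          ring
        rw [Finset.sum_congr rfl fun f _ => h1 f, Finset.sum_sub_distrib,
          wcost_eq_sum ω W, Finset.mul_sum]
      -- zero-preservation and strict decrease of the measure
      have hKz : ∀ f, K f = 0 → K' f = 0 := fun f hf => by
        rw [hK']; simp only; rw [hf, wflow_eq_zero_of_Kzero hent hf]; ring
      have hXz : ∀ a, X a = 0 → X' a = 0 := by
        intro a ha
        rw [hXd]
        by_cases hau : u = a
        · subst hau; exact absurd ha hXu.ne'
        · simp [hau, ha]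
      have hYz : ∀ a, Y a = 0 → Y' a = 0 := by
        intro a ha
        rw [hYd]
        by_cases haw : w = a
        · subst haw; exact absurd ha hYw.ne'
        · simp [haw, ha]
      have l1 := suppCard_le hKz
      have l2 := suppCard_le hXz
      have l3 := suppCard_le hYz
      have hmeas : suppCard K' + suppCard X' + suppCard Y' ≤ n := by
        have hmem : m ∈ insert (X u) (insert (Y w)
            (W.toFinset.image fun e => |K e.1| / (wcount W e.1 : ℝ))) :=
          Finset.min'_mem S hSne
        rcases Finset.mem_insert.mp hmem with heq | hmem
        · have : suppCard X' < suppCard X := by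
            refine suppCard_lt hXz hXu.ne' ?_
            rw [hXd]; dsimp only; rw [hifu, heq]; ring
          omega
        rcases Finset.mem_insert.mp hmem with heq | hmem
        · have : suppCard Y' < suppCard Y := by
            refine suppCard_lt hYz hYw.ne' ?_
            rw [hYd]; dsimp only; rw [hifw, heq]; ring
          omega
        · obtain ⟨e, heM, heq⟩ := Finset.mem_image.mp hmem
          have heM' := List.mem_toFinset.mp heM
          have : suppCard K' < suppCard K := by
            refine suppCard_lt hKz (opos_ne_zero (hent e heM')) ?_
            rw [hK']
            simp only
            rw [← heq]
            exact Kzero_of_reduce hent (wcount_pos_of_mem heM').ne'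
          omega
      obtain ⟨π', hπ'0, hπ'r, hπ'c, hπ'cost⟩ := ih K' X' Y' hmeas hX'0 hY'0 hdiv'
      refine ⟨fun a b => π' a b + if u = a ∧ w = b then m else 0, ?_, ?_, ?_, ?_⟩
      · intro a b
        have := hπ'0 a b
        dsimp only
        split_ifs <;> linarith
      · intro a
        rw [Finset.sum_add_distrib, hπ'r a]
        have hrow : (∑ b, if u = a ∧ w = b then m else 0) = if u = a then m else 0 := by
          by_cases ha : u = a
          · subst ha; simp
          · simp [ha]
        rw [hrow, hXd]
        ring
      · intro b
        rw [Finset.sum_add_distrib, hπ'c b]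
        have hcol : (∑ a, if u = a ∧ w = b then m else 0) = if w = b then m else 0 := by
          by_cases hb : w = b
          · subst hb; simp
          · simp [hb]
        rw [hcol, hYd]
        ring
      · have hsplit : ∀ a, (∑ b, gd src tgt ω a b * (π' a b + if u = a ∧ w = b then m else 0))
            = (∑ b, gd src tgt ω a b * π' a b)
              + ∑ b, gd src tgt ω a b * (if u = a ∧ w = b then m else 0) := by
          intro a
          rw [← Finset.sum_add_distrib]
          exact Finset.sum_congr rfl fun b _ => by ring
        have inner : ∀ a, (∑ b, gd src tgt ω a b * (if u = a ∧ w = b then m else 0))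
            = (if u = a then gd src tgt ω u w * m else 0) := by
          intro a
          by_cases ha : u = a
          · subst ha
            rw [if_pos rfl, Finset.sum_eq_single w]
            · simp
            · intro b _ hb; simp [Ne.symm hb]
            · intro h; exact absurd (Finset.mem_univ w) h
          · rw [if_neg ha]
            refine Finset.sum_eq_zero fun b _ => ?_
            simp [ha]
        have outer : (∑ a, ∑ b, gd src tgt ω a b * (if u = a ∧ w = b then m else 0))
            = gd src tgt ω u w * m := by
          rw [Finset.sum_congr rfl fun a _ => inner a]
          simp
        calc (∑ a, ∑ b, gd src tgt ω a b * (π' a b + if u = a ∧ w = b then m else 0))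
            = (∑ a, ∑ b, gd src tgt ω a b * π' a b) + gd src tgt ω u w * m := by
              rw [Finset.sum_congr rfl fun a _ => hsplit a, Finset.sum_add_distrib, outer]
          _ ≤ (∑ f, ω f * |K' f|) + wcost ω W * m := by
              refine add_le_add hπ'cost ?_
              exact mul_le_mul_of_nonneg_right (gd_le_walk hω0 hW.walkCost) hmpos.le
          _ = ∑ f, ω f * |K f| := by rw [hcost']; ring

end DecompMain


section Inst

def esrc (src : E → V) : E ⊕ V → Option V :=
  Sum.elim (fun e => some (src e)) (fun v => some v)

def etgt (tgt : E → V) : E ⊕ V → Option V :=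
  Sum.elim (fun e => some (tgt e)) (fun _ => none)

def ewt (ω : E → ℝ) (lam : ℝ) : E ⊕ V → ℝ := Sum.elim ω (fun _ => lam)

lemma stepStar_iff (src tgt : E → V) (ω : E → ℝ) (lam : ℝ) (a b : Option V) (r : ℝ) :
    stepStar src tgt ω lam a b r ↔ gstep (esrc src) (etgt tgt) (ewt ω lam) a b r := by
  constructor
  · rintro (⟨e, u, v, rfl, rfl, rfl, hor⟩ | ⟨⟨v, rfl⟩, rfl, rfl⟩ | ⟨rfl, ⟨v, rfl⟩, rfl⟩)
    · refine ⟨Sum.inl e, rfl, ?_⟩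
      rcases hor with ⟨h1, h2⟩ | ⟨h1, h2⟩
      · left; simp [esrc, etgt, h1, h2]
      · right; simp [esrc, etgt, h1, h2]
    · exact ⟨Sum.inr v, rfl, Or.inl (by simp [esrc, etgt])⟩
    · exact ⟨Sum.inr v, rfl, Or.inr (by simp [esrc, etgt])⟩
  · rintro ⟨f, rfl, hor⟩
    rcases f with e | v
    · left
      rcases hor with ⟨h1, h2⟩ | ⟨h1, h2⟩
      · exact ⟨e, src e, tgt e, h1.symm, h2.symm, rfl, Or.inl ⟨rfl, rfl⟩⟩
      · exact ⟨e, tgt e, src e, h2.symm, h1.symm, rfl, Or.inr ⟨rfl, rfl⟩⟩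
    · rcases hor with ⟨h1, h2⟩ | ⟨h1, h2⟩
      · exact Or.inr (Or.inl ⟨⟨v, h1.symm⟩, h2.symm, rfl⟩)
      · exact Or.inr (Or.inr ⟨h2.symm, ⟨v, h1.symm⟩, rfl⟩)

lemma dlam_eq_gd (src tgt : E → V) (ω : E → ℝ) (lam : ℝ) (a b : Option V) :
    dlam src tgt ω lam a b = gd (esrc src) (etgt tgt) (ewt ω lam) a b := by
  unfold dlam gd
  congr 1
  ext r
  exact ⟨fun h => h.mono fun a b r h' => (stepStar_iff src tgt ω lam a b r).mp h',
    fun h => h.mono fun a b r h' => (stepStar_iff src tgt ω lam a b r).mpr h'⟩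

lemma ewt_pos {ω : E → ℝ} {lam : ℝ} (hω : ∀ e, 0 < ω e) (hlam : 0 < lam) :
    ∀ f : E ⊕ V, 0 < ewt ω lam f := by
  rintro (e | v)
  · simpa [ewt] using hω e
  · simpa [ewt] using hlam

lemma div'_ext_some (src tgt : E → V) (K : E ⊕ V → ℝ) (v : V) :
    div' (esrc src) (etgt tgt) K (some v)
      = div' src tgt (fun e => K (Sum.inl e)) v - K (Sum.inr v) := by
  simp only [div', Fintype.sum_sum_type, esrc, etgt, Sum.elim_inl, Sum.elim_inr]
  have h1 : (∑ u : V, if (none : Option V) = some v then K (Sum.inr u) else 0) = 0 := by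
    simp
  have h2 : (∑ u : V, if (some u : Option V) = some v then K (Sum.inr u) else 0)
      = K (Sum.inr v) := by
    rw [Finset.sum_eq_single v]
    · simp
    · intro u _ hu; simp [hu]
    · intro h; exact absurd (Finset.mem_univ v) h
  have h3 : ∀ (g : E → V), (∑ e : E, if (some (g e) : Option V) = some v then K (Sum.inl e) else 0)
      = ∑ e : E, if g e = v then K (Sum.inl e) else 0 := by
    intro g
    refine Finset.sum_congr rfl fun e _ => ?_
    by_cases h : g e = v
    · simp [h]
    · simp [h]
  simp only [Option.some.injEq, reduceCtorEq, ite_false, if_false, Finset.sum_const_zero, add_zero,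
    Finset.sum_ite_eq', Finset.mem_univ, if_true]
  ring

lemma div'_ext_none (src tgt : E → V) (K : E ⊕ V → ℝ) :
    div' (esrc src) (etgt tgt) K none = ∑ u, K (Sum.inr u) := by
  simp only [div', Fintype.sum_sum_type, esrc, etgt, Sum.elim_inl, Sum.elim_inr]
  simp

lemma div'_total (src tgt : E → V) (J : E → ℝ) : ∑ v, div' src tgt J v = 0 := by
  simp only [div']
  rw [Finset.sum_sub_distrib]
  rw [Finset.sum_comm (f := fun v e => if tgt e = v then J e else 0)]
  rw [Finset.sum_comm (f := fun v e => if src e = v then J e else 0)]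
  simp [Finset.sum_ite_eq]

lemma walk_exists (src tgt : E → V) (ω : E → ℝ) (lam : ℝ) (a b : Option V) :
    ∃ r, WalkCost (stepStar src tgt ω lam) a b r := by
  cases a with
  | none =>
    cases b with
    | none => exact ⟨0, WalkCost.refl none⟩
    | some w =>
      exact ⟨lam + 0, WalkCost.tail (Or.inr (Or.inr ⟨rfl, ⟨w, rfl⟩, rfl⟩)) (WalkCost.refl _)⟩
  | some v =>
    cases b with
    | none =>
      exact ⟨lam + 0, WalkCost.tail (Or.inr (Or.inl ⟨⟨v, rfl⟩, rfl, rfl⟩)) (WalkCost.refl _)⟩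
    | some w =>
      exact ⟨lam + (lam + 0), WalkCost.tail (Or.inr (Or.inl ⟨⟨v, rfl⟩, rfl, rfl⟩))
        (WalkCost.tail (Or.inr (Or.inr ⟨rfl, ⟨w, rfl⟩, rfl⟩)) (WalkCost.refl _))⟩

end Inst

/-- Equivalence of the sink-transport (Figalli–Gigli-style) problem on the
extended graph `G_*` and the unbalanced Beckmann problem with `p = 1`. -/
theorem sink_transport_eq_unbalanced_beckmann (src tgt : E → V) (ω : E → ℝ)
    (hω : ∀ e, 0 < ω e) (hconn : IncConnected src tgt) (lam : ℝ)
    (hlam : 0 < lam) (x y : V → ℝ) (hx : ∀ v, 0 ≤ x v) (hy : ∀ v, 0 ≤ y v) :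
    sInf {c : ℝ | ∃ π : Option V → Option V → ℝ,
        (∀ a b, 0 ≤ π a b) ∧
        (∀ v : V, ∑ b, π (some v) b = x v) ∧
        (∀ w : V, ∑ a, π a (some w) = y w) ∧
        c = ∑ a, ∑ b, dlam src tgt ω lam a b * π a b} =
      sInf {c : ℝ | ∃ (J : E → ℝ) (z : V → ℝ),
        (∀ v, div' src tgt J v = y v - x v + z v) ∧
        c = (∑ e, ω e * |J e|) + lam * ∑ v, |z v|} := by
  classical
  have hω0 : ∀ f : E ⊕ V, 0 ≤ ewt ω lam f := fun f => (ewt_pos hω hlam f).le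
  have hd0 : ∀ a b : Option V, 0 ≤ dlam src tgt ω lam a b := fun a b => by
    rw [dlam_eq_gd]; exact gd_nonneg hω0 a b
  have hbddL : BddBelow {c : ℝ | ∃ π : Option V → Option V → ℝ,
      (∀ a b, 0 ≤ π a b) ∧
      (∀ v : V, ∑ b, π (some v) b = x v) ∧
      (∀ w : V, ∑ a, π a (some w) = y w) ∧
      c = ∑ a, ∑ b, dlam src tgt ω lam a b * π a b} := by
    refine ⟨0, ?_⟩
    rintro c ⟨π, hπ0, -, -, rfl⟩
    exact Finset.sum_nonneg fun a _ => Finset.sum_nonneg fun b _ =>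
      mul_nonneg (hd0 a b) (hπ0 a b)
  have hbddR : BddBelow {c : ℝ | ∃ (J : E → ℝ) (z : V → ℝ),
      (∀ v, div' src tgt J v = y v - x v + z v) ∧
      c = (∑ e, ω e * |J e|) + lam * ∑ v, |z v|} := by
    refine ⟨0, ?_⟩
    rintro c ⟨J, z, -, rfl⟩
    have h1 : (0:ℝ) ≤ ∑ e, ω e * |J e| :=
      Finset.sum_nonneg fun e _ => mul_nonneg (hω e).le (abs_nonneg _)
    have h2 : (0:ℝ) ≤ ∑ v, |z v| := Finset.sum_nonneg fun v _ => abs_nonneg _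
    nlinarith
  apply le_antisymm
  · -- transport ≤ Beckmann
    refine le_csInf ⟨(∑ e, ω e * |(0 : E → ℝ) e|) + lam * ∑ v, |x v - y v|,
      0, fun v => x v - y v, fun v => by rw [div'_zero]; ring, rfl⟩ ?_
    rintro c ⟨J, z, hdivJ, rfl⟩
    set K : E ⊕ V → ℝ := Sum.elim J z with hK
    set X : Option V → ℝ := fun a => a.elim (∑ v, y v) x with hX1
    set Y : Option V → ℝ := fun b => b.elim (∑ v, x v) y with hY1
    have hzsum : ∑ u, z u = (∑ v, x v) - (∑ v, y v) := by
      have h0 := div'_total src tgt J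
      have h1 : ∑ v, div' src tgt J v = ∑ v, (y v - x v + z v) :=
        Finset.sum_congr rfl fun v _ => hdivJ v
      rw [h0] at h1
      rw [Finset.sum_add_distrib, Finset.sum_sub_distrib] at h1
      linarith
    have hdivK : ∀ v : Option V, div' (esrc src) (etgt tgt) K v = Y v - X v := by
      intro v
      cases v with
      | none =>
        rw [div'_ext_none]
        show ∑ u, z u = (∑ v, x v) - (∑ v, y v)
        exact hzsum
      | some v =>
        rw [div'_ext_some]
        show div' src tgt J v - z v = y v - x v
        rw [hdivJ v]
        ring
    have hXnn : ∀ a, 0 ≤ X a := by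
      rintro (_ | v)
      · exact Finset.sum_nonneg fun v _ => hy v
      · exact hx v
    have hYnn : ∀ a, 0 ≤ Y a := by
      rintro (_ | v)
      · exact Finset.sum_nonneg fun v _ => hx v
      · exact hy v
    obtain ⟨π, hπ0, hπr, hπc, hπcost⟩ := decomp (ewt ω lam) (ewt_pos hω hlam)
      (suppCard K + suppCard X + suppCard Y) K X Y le_rfl hXnn hYnn hdivK
    have hcostK : (∑ f, ewt ω lam f * |K f|) = (∑ e, ω e * |J e|) + lam * ∑ v, |z v| := by
      rw [Fintype.sum_sum_type]
      simp only [ewt, hK, Sum.elim_inl, Sum.elim_inr]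
      rw [Finset.mul_sum]
    have hmem : (∑ a, ∑ b, dlam src tgt ω lam a b * π a b) ∈
        {c : ℝ | ∃ π : Option V → Option V → ℝ,
          (∀ a b, 0 ≤ π a b) ∧
          (∀ v : V, ∑ b, π (some v) b = x v) ∧
          (∀ w : V, ∑ a, π a (some w) = y w) ∧
          c = ∑ a, ∑ b, dlam src tgt ω lam a b * π a b} :=
      ⟨π, hπ0, fun v => hπr (some v), fun w => hπc (some w), rfl⟩
    calc sInf _ ≤ ∑ a, ∑ b, dlam src tgt ω lam a b * π a b := csInf_le hbddL hmem
      _ ≤ (∑ e, ω e * |J e|) + lam * ∑ v, |z v| := by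
          rw [← hcostK]
          simpa only [dlam_eq_gd] using hπcost
  · -- Beckmann ≤ transport
    refine le_csInf ?_ ?_
    · -- transport problem is feasible
      refine ⟨_, fun a b => a.elim (b.elim 0 y) (fun v => b.elim (x v) (fun _ => 0)),
        ?_, ?_, ?_, rfl⟩
      · rintro (_ | v) (_ | w)
        · exact le_refl 0
        · exact hy w
        · exact hx v
        · exact le_refl 0
      · intro v
        rw [Fintype.sum_option]
        simp
      · intro w
        rw [Fintype.sum_option]
        simp
    rintro c ⟨π, hπ0, hrow, hcol, rfl⟩
    refine le_of_forall_pos_le_add ?_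
    intro ε hε
    set T := ∑ a : Option V, ∑ b : Option V, π a b with hT
    have hT0 : 0 ≤ T :=
      Finset.sum_nonneg fun a _ => Finset.sum_nonneg fun b _ => hπ0 a b
    set ε' := ε / (T + 1) with hε'def
    have hε'pos : 0 < ε' := div_pos hε (by linarith)
    have hKab : ∀ p : Option V × Option V, ∃ Kab : E ⊕ V → ℝ,
        (∀ v : Option V, div' (esrc src) (etgt tgt) Kab v
          = (if p.2 = v then (1:ℝ) else 0) - (if p.1 = v then 1 else 0)) ∧
        (∑ f, ewt ω lam f * |Kab f|) ≤ dlam src tgt ω lam p.1 p.2 + ε' := by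
      intro p
      have hne : {r : ℝ | WalkCost (stepStar src tgt ω lam) p.1 p.2 r}.Nonempty :=
        walk_exists src tgt ω lam p.1 p.2
      obtain ⟨r, hr, hrlt⟩ := Real.lt_sInf_add_pos hne hε'pos
      obtain ⟨Kab, h1, h2⟩ := walk_to_flow (esrc src) (etgt tgt) (ewt ω lam) hω0
        (WalkCost.mono (fun a b r h => (stepStar_iff src tgt ω lam a b r).mp h) hr)
      exact ⟨Kab, h1, h2.trans (le_of_lt hrlt)⟩
    choose Kab hdivab hcostab using hKab
    set Kt : E ⊕ V → ℝ := fun f => ∑ p : Option V × Option V, π p.1 p.2 * Kab p f with hKt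
    set J : E → ℝ := fun e => Kt (Sum.inl e) with hJ
    set z : V → ℝ := fun v => Kt (Sum.inr v) with hz
    have hmarg1 : ∀ v : V, (∑ p : Option V × Option V,
        π p.1 p.2 * (if p.1 = some v then (1:ℝ) else 0)) = x v := by
      intro v
      rw [Fintype.sum_prod_type]
      have h1 : ∀ a : Option V, (∑ b, π a b * (if a = some v then (1:ℝ) else 0))
          = (if a = some v then x v else 0) := by
        intro a
        by_cases ha : a = some v
        · subst ha
          rw [if_pos rfl]
          simp only [if_pos rfl, mul_one]
          exact hrow v
        · simp [ha]
      rw [Finset.sum_congr rfl fun a _ => h1 a, Finset.sum_eq_single (some v)]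
      · simp
      · intro a _ ha; simp [ha]
      · intro h; exact absurd (Finset.mem_univ _) h
    have hmarg2 : ∀ v : V, (∑ p : Option V × Option V,
        π p.1 p.2 * (if p.2 = some v then (1:ℝ) else 0)) = y v := by
      intro v
      rw [Fintype.sum_prod_type]
      have h1 : ∀ a : Option V, (∑ b, π a b * (if b = some v then (1:ℝ) else 0))
          = π a (some v) := by
        intro a
        rw [Finset.sum_eq_single (some v)]
        · simp
        · intro b _ hb; simp [hb]
        · intro h; exact absurd (Finset.mem_univ _) h
      rw [Finset.sum_congr rfl fun a _ => h1 a]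
      exact hcol v
    have hdivJ : ∀ v, div' src tgt J v = y v - x v + z v := by
      intro v
      have step1 : div' src tgt J v
          = ∑ p : Option V × Option V, π p.1 p.2 * div' src tgt (fun e => Kab p (Sum.inl e)) v := by
        rw [show (J : E → ℝ) = fun e => ∑ p : Option V × Option V,
          (π p.1 p.2 * Kab p (Sum.inl e)) from rfl]
        rw [div'_sum src tgt Finset.univ (fun p e => π p.1 p.2 * Kab p (Sum.inl e)) v]
        refine Finset.sum_congr rfl fun p _ => ?_
        rw [show (fun e => π p.1 p.2 * Kab p (Sum.inl e))
          = (π p.1 p.2) • (fun e => Kab p (Sum.inl e)) from rfl, div'_smul]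
      have step2 : ∀ p : Option V × Option V, div' src tgt (fun e => Kab p (Sum.inl e)) v
          = (if p.2 = some v then (1:ℝ) else 0) - (if p.1 = some v then 1 else 0)
            + Kab p (Sum.inr v) := by
        intro p
        have := div'_ext_some src tgt (Kab p) v
        rw [hdivab p (some v)] at this
        linarith
      rw [step1, Finset.sum_congr rfl fun p _ => by rw [step2 p]]
      have expand : ∀ p : Option V × Option V,
          π p.1 p.2 * ((if p.2 = some v then (1:ℝ) else 0) - (if p.1 = some v then 1 else 0)
            + Kab p (Sum.inr v))
          = π p.1 p.2 * (if p.2 = some v then (1:ℝ) else 0)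
            - π p.1 p.2 * (if p.1 = some v then (1:ℝ) else 0)
            + π p.1 p.2 * Kab p (Sum.inr v) := fun p => by ring
      rw [Finset.sum_congr rfl fun p _ => expand p, Finset.sum_add_distrib,
        Finset.sum_sub_distrib, hmarg1 v, hmarg2 v]
    have habs : ∀ f, |Kt f| ≤ ∑ p : Option V × Option V, π p.1 p.2 * |Kab p f| := by
      intro f
      calc |Kt f| ≤ ∑ p : Option V × Option V, |π p.1 p.2 * Kab p f| :=
            Finset.abs_sum_le_sum_abs _ _
        _ = ∑ p : Option V × Option V, π p.1 p.2 * |Kab p f| :=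
            Finset.sum_congr rfl fun p _ => by
              rw [abs_mul, abs_of_nonneg (hπ0 p.1 p.2)]
    have hcost : (∑ e, ω e * |J e|) + lam * ∑ v, |z v|
        ≤ (∑ a, ∑ b, dlam src tgt ω lam a b * π a b) + ε' * T := by
      calc (∑ e, ω e * |J e|) + lam * ∑ v, |z v| = ∑ f, ewt ω lam f * |Kt f| := by
            rw [Fintype.sum_sum_type]
            simp only [ewt, Sum.elim_inl, Sum.elim_inr]
            rw [Finset.mul_sum]
        _ ≤ ∑ f, ewt ω lam f * (∑ p : Option V × Option V, π p.1 p.2 * |Kab p f|) :=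
            Finset.sum_le_sum fun f _ => mul_le_mul_of_nonneg_left (habs f) (hω0 f)
        _ = ∑ p : Option V × Option V, π p.1 p.2 * (∑ f, ewt ω lam f * |Kab p f|) := by
            rw [Finset.sum_congr rfl fun f (_ : f ∈ Finset.univ) => Finset.mul_sum
              Finset.univ (fun p => π p.1 p.2 * |Kab p f|) (ewt ω lam f), Finset.sum_comm]
            refine Finset.sum_congr rfl fun p _ => ?_
            rw [Finset.mul_sum]
            exact Finset.sum_congr rfl fun f _ => by ring
        _ ≤ ∑ p : Option V × Option V, π p.1 p.2 * (dlam src tgt ω lam p.1 p.2 + ε') :=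
            Finset.sum_le_sum fun p _ =>
              mul_le_mul_of_nonneg_left (hcostab p) (hπ0 p.1 p.2)
        _ = (∑ a, ∑ b, dlam src tgt ω lam a b * π a b) + ε' * T := by
            rw [Finset.sum_congr rfl fun (p : Option V × Option V) _ =>
              mul_add (π p.1 p.2) (dlam src tgt ω lam p.1 p.2) ε', Finset.sum_add_distrib]
            congr 1
            · rw [Fintype.sum_prod_type]
              exact Finset.sum_congr rfl fun a _ => Finset.sum_congr rfl fun b _ => by ring
            · have h5 : T = ∑ p : Option V × Option V, π p.1 p.2 := by
                rw [Fintype.sum_prod_type]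
              rw [h5, Finset.mul_sum]
              exact Finset.sum_congr rfl fun p _ => by ring
    have hε'T : ε' * T ≤ ε := by
      rw [hε'def, div_mul_eq_mul_div, div_le_iff₀ (by linarith : (0:ℝ) < T + 1)]
      nlinarith
    have hmem : (∑ e, ω e * |J e|) + lam * ∑ v, |z v| ∈
        {c : ℝ | ∃ (J : E → ℝ) (z : V → ℝ),
          (∀ v, div' src tgt J v = y v - x v + z v) ∧
          c = (∑ e, ω e * |J e|) + lam * ∑ v, |z v|} := ⟨J, z, hdivJ, rfl⟩
    calc sInf _ ≤ (∑ e, ω e * |J e|) + lam * ∑ v, |z v| := csInf_le hbddR hmem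
      _ ≤ (∑ a, ∑ b, dlam src tgt ω lam a b * π a b) + ε' * T := hcost
      _ ≤ (∑ a, ∑ b, dlam src tgt ω lam a b * π a b) + ε := by linarith
end
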